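/- arXiv:2110.01559 — 5 statements merged into one kernel-verified Lean document; each statement's English description precedes it below -/
import Mathlib

section
/- Let F be a probability distribution on ℝ ∪ {−∞} with finite essential supremum L := inf{z ∈ ℝ : P(w > z) = 0} satisfying −∞ < L ≤ 0, and let (w_{i,j}, 0 ≤ i < j) be i.i.d. random variables with law F. Then W_n converges in distribution, as n → ∞, to the random variable max(w, 2L), where w has law F; that is, the law of W_n converges weakly to the pushforward of F under the map x ↦ max(x, 2L). -/
open MeasureTheory ProbabilityTheory Filter
open scoped ENNReal

noncomputable section

/-- Charge of a path (a list of vertices): sum of the edge charges, with the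
convention `⊥ + x = ⊥` (built into `EReal` addition, values in `ℝ ∪ {-∞}` never meet `⊤`).
A single-vertex path has charge `0`. -/
def pathCharge (w : ℕ → ℕ → EReal) : List ℕ → EReal
  | [] => 0
  | [_] => 0
  | i :: j :: rest => w i j + pathCharge w (j :: rest)

/-- `π` is a path from `i` to `j`: a finite strictly increasing list of vertices
starting at `i` and ending at `j`. -/
def IsPath (i j : ℕ) (π : List ℕ) : Prop :=
  π.Chain' (· < ·) ∧ π.head? = some i ∧ π.getLast? = some j

/-- `W_{i,j}`: the maximal charge over all paths from `i` to `j`. -/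
def maxCharge (w : ℕ → ℕ → EReal) (i j : ℕ) : EReal :=
  sSup (pathCharge w '' {π | IsPath i j π})

lemma pathCharge_nil (w : ℕ → ℕ → EReal) : pathCharge w List.nil = 0 := by
  simp [pathCharge]

lemma pathCharge_single (w : ℕ → ℕ → EReal) (i : ℕ) : pathCharge w (i :: List.nil) = 0 := by
  simp [pathCharge]

lemma pathCharge_cons (w : ℕ → ℕ → EReal) (i j : ℕ) (r : List ℕ) :
    pathCharge w (i :: j :: r) = w i j + pathCharge w (j :: r) := by
  simp [pathCharge]

lemma measurable_ereal_add {Ω : Type*} [MeasurableSpace Ω] {f g : Ω → EReal}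
    (hf : Measurable f) (hg : Measurable g) : Measurable (fun ω => f ω + g ω) := by
  have hrw : (fun ω => f ω + g ω) = fun ω =>
      if f ω = ⊥ ∨ g ω = ⊥ then (⊥ : EReal)
      else if f ω = ⊤ ∨ g ω = ⊤ then ⊤
      else (((f ω).toReal + (g ω).toReal : ℝ) : EReal) := by
    funext ω
    induction (f ω) using EReal.rec <;> induction (g ω) using EReal.rec <;>
      simp [← EReal.coe_add]
  rw [hrw]
  refine Measurable.ite ?_ measurable_const (Measurable.ite ?_ measurable_const ?_)
  · exact ((hf (measurableSet_singleton _)).union (hg (measurableSet_singleton _)))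
  · exact ((hf (measurableSet_singleton _)).union (hg (measurableSet_singleton _)))
  · exact measurable_coe_real_ereal.comp
      ((measurable_ereal_toReal.comp hf).add (measurable_ereal_toReal.comp hg))

lemma measurable_pathCharge {Ω : Type*} [MeasurableSpace Ω] (X : ℕ × ℕ → Ω → EReal)
    (hmeas : ∀ p, Measurable (X p)) (l : List ℕ) :
    Measurable (fun ω => pathCharge (fun i j => X (i, j) ω) l) := by
  induction l with
  | nil => simp only [pathCharge_nil]; exact measurable_const
  | cons a tl ih =>
    cases tl with
    | nil => simp only [pathCharge_single]; exact measurable_const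
    | cons b tl2 =>
      simp only [pathCharge_cons]
      exact measurable_ereal_add (hmeas (a, b)) ih

lemma measurable_maxCharge {Ω : Type*} [MeasurableSpace Ω] (X : ℕ × ℕ → Ω → EReal)
    (hmeas : ∀ p, Measurable (X p)) (i j : ℕ) :
    Measurable (fun ω => maxCharge (fun a b => X (a, b) ω) i j) := by
  have h : ∀ ω, maxCharge (fun a b => X (a, b) ω) i j
      = ⨆ π : {π : List ℕ | IsPath i j π}, pathCharge (fun a b => X (a, b) ω) π.1 := by
    intro ω; rw [maxCharge, sSup_image']
  simp only [h]
  exact Measurable.iSup fun π => measurable_pathCharge X hmeas π.1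

lemma pathCharge_nonpos {w : ℕ → ℕ → EReal} {L : ℝ}
    (hw : ∀ i j, w i j ≤ (L : EReal)) (hL0 : L ≤ 0) :
    ∀ l, pathCharge w l ≤ 0 := by
  intro l
  induction l with
  | nil => simp [pathCharge_nil]
  | cons a tl ih =>
    cases tl with
    | nil => simp [pathCharge_single]
    | cons b tl2 =>
      rw [pathCharge_cons]
      calc w a b + pathCharge w (b :: tl2) ≤ (L : EReal) + 0 := add_le_add (hw a b) ih
        _ = (L : EReal) := add_zero _
        _ ≤ 0 := by exact_mod_cast hL0

lemma pathCharge_le_two {w : ℕ → ℕ → EReal} {L : ℝ}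
    (hw : ∀ i j, w i j ≤ (L : EReal)) (hL0 : L ≤ 0) (a b c : ℕ) (tl : List ℕ) :
    pathCharge w (a :: b :: c :: tl) ≤ ((2 * L : ℝ) : EReal) := by
  rw [pathCharge_cons, pathCharge_cons]
  calc w a b + (w b c + pathCharge w (c :: tl))
      ≤ (L : EReal) + ((L : EReal) + 0) :=
        add_le_add (hw a b) (add_le_add (hw b c) (pathCharge_nonpos hw hL0 _))
    _ = ((2 * L : ℝ) : EReal) := by
        rw [add_zero, ← EReal.coe_add]; congr 1; ring

lemma isPath_cases {n : ℕ} (hn : 0 < n) {π : List ℕ} (h : IsPath 0 n π) :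
    π = (0 :: n :: List.nil) ∨ ∃ a b c tl, π = a :: b :: c :: tl := by
  obtain ⟨hchain, hhead, hlast⟩ := h
  cases π with
  | nil => simp at hhead
  | cons a t =>
    have ha : a = 0 := by simpa using hhead
    subst ha
    cases t with
    | nil =>
      simp [List.getLast?] at hlast
      omega
    | cons b t2 =>
      cases t2 with
      | nil =>
        left
        have hb : b = n := by simpa [List.getLast?] using hlast
        subst hb; rfl
      | cons c t3 => exact Or.inr ⟨0, b, c, t3, rfl⟩

lemma isPath_pair {n : ℕ} (hn : 0 < n) : IsPath 0 n (0 :: n :: List.nil) := by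
  refine ⟨?_, rfl, rfl⟩
  simp [List.Chain', List.isChain_cons_cons, hn]

lemma isPath_triple {k n : ℕ} (h1 : 0 < k) (h2 : k < n) : IsPath 0 n (0 :: k :: n :: List.nil) := by
  refine ⟨?_, rfl, rfl⟩
  simp [List.Chain', List.isChain_cons_cons, h1, h2]

lemma le_maxCharge_of_isPath {w : ℕ → ℕ → EReal} {i j : ℕ} {π : List ℕ} (h : IsPath i j π) :
    pathCharge w π ≤ maxCharge w i j :=
  le_sSup ⟨π, h, rfl⟩

lemma maxCharge_le {w : ℕ → ℕ → EReal} {L : ℝ} {n : ℕ}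
    (hw : ∀ i j, w i j ≤ (L : EReal)) (hL0 : L ≤ 0) (hn : 0 < n) :
    maxCharge w 0 n ≤ max (w 0 n) ((2 * L : ℝ) : EReal) := by
  apply sSup_le
  rintro y ⟨π, hπ, rfl⟩
  rcases isPath_cases hn hπ with rfl | ⟨a, b, c, tl, rfl⟩
  · simp only [pathCharge_cons, pathCharge_single, add_zero]
    exact le_max_left _ _
  · exact le_trans (pathCharge_le_two hw hL0 a b c tl) (le_max_right _ _)


lemma measure_biInter_compl_events {Ω : Type} [MeasurableSpace Ω] (μ : Measure Ω)
    [IsProbabilityMeasure μ] (X : ℕ × ℕ → Ω → EReal)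
    (hmeas : ∀ p, Measurable (X p))
    (hindep : iIndepFun X μ)
    (n : ℕ) (s : Set EReal) (hs : MeasurableSet s) (q : ℝ≥0∞)
    (hq : ∀ p, μ (X p ⁻¹' s) = q) :
    ∀ m : ℕ, μ (⋂ k ∈ Finset.Icc 1 m, (X (0, k) ⁻¹' s ∩ X (k, n) ⁻¹' s)ᶜ) = (1 - q ^ 2) ^ m := by
  intro m
  induction m with
  | zero =>
    rw [show Finset.Icc 1 0 = (∅ : Finset ℕ) from Finset.Icc_eq_empty (by omega)]
    simp
  | succ m ih =>
    classical
    -- index sets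
    set S : Finset (ℕ × ℕ) :=
      ((Finset.Icc 1 m).image fun k => ((0 : ℕ), k)) ∪ ((Finset.Icc 1 m).image fun k => (k, n))
      with hS
    set T : Finset (ℕ × ℕ) := {((0 : ℕ), m + 1), (m + 1, n)} with hT
    have hST : Disjoint S T := by
      rw [Finset.disjoint_left]
      intro p hp hpT
      simp only [hS, Finset.mem_union, Finset.mem_image, Finset.mem_Icc] at hp
      simp only [hT, Finset.mem_insert, Finset.mem_singleton] at hpT
      rcases hp with ⟨k, hk, rfl⟩ | ⟨k, hk, rfl⟩ <;>
        rcases hpT with h | h <;> · injection h with h1 h2; omega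
    have hIF := hindep.indepFun_finset S T hST hmeas
    -- extraction maps on S
    set eA : ℕ → (S → EReal) → EReal := fun k v =>
      if h : ((0 : ℕ), k) ∈ S then v ⟨((0 : ℕ), k), h⟩ else ⊥ with heA
    set eB : ℕ → (S → EReal) → EReal := fun k v =>
      if h : ((k : ℕ), n) ∈ S then v ⟨((k : ℕ), n), h⟩ else ⊥ with heB
    have heAm : ∀ k, Measurable (eA k) := by
      intro k
      by_cases h : ((0 : ℕ), k) ∈ S
      · simp only [heA, dif_pos h]; exact measurable_pi_apply _
      · simp only [heA, dif_neg h]; exact measurable_const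
    have heBm : ∀ k, Measurable (eB k) := by
      intro k
      by_cases h : ((k : ℕ), n) ∈ S
      · simp only [heB, dif_pos h]; exact measurable_pi_apply _
      · simp only [heB, dif_neg h]; exact measurable_const
    set sA : Set (S → EReal) := ⋂ k ∈ Finset.Icc 1 m, (eA k ⁻¹' s ∩ eB k ⁻¹' s)ᶜ with hsA
    have hsAm : MeasurableSet sA :=
      MeasurableSet.biInter (Finset.Icc 1 m).countable_toSet fun k _ =>
        (((heAm k) hs).inter ((heBm k) hs)).compl
    have haT : ((0 : ℕ), m + 1) ∈ T := by simp [hT]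
    have hbT : ((m + 1 : ℕ), n) ∈ T := by simp [hT]
    set sB : Set (T → EReal) :=
      (fun v : T → EReal => v ⟨((0 : ℕ), m + 1), haT⟩) ⁻¹' s ∩
      (fun v : T → EReal => v ⟨((m + 1 : ℕ), n), hbT⟩) ⁻¹' s with hsB
    have hv1 : Measurable (fun v : T → EReal => v ⟨((0 : ℕ), m + 1), haT⟩) :=
      measurable_pi_apply _
    have hv2 : Measurable (fun v : T → EReal => v ⟨((m + 1 : ℕ), n), hbT⟩) :=
      measurable_pi_apply _
    have hsBm : MeasurableSet sB := by
      rw [hsB]; exact (hv1 hs).inter (hv2 hs)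
    -- preimage identification
    have hpreA : (fun ω (i : S) => X i ω) ⁻¹' sA
        = ⋂ k ∈ Finset.Icc 1 m, (X (0, k) ⁻¹' s ∩ X (k, n) ⁻¹' s)ᶜ := by
      rw [hsA, Set.preimage_iInter₂]
      refine Set.iInter₂_congr fun k hk => ?_
      have h0 : ((0 : ℕ), k) ∈ S := by
        simp only [hS, Finset.mem_union, Finset.mem_image]
        exact Or.inl ⟨k, hk, rfl⟩
      have h1 : ((k : ℕ), n) ∈ S := by
        simp only [hS, Finset.mem_union, Finset.mem_image]
        exact Or.inr ⟨k, hk, rfl⟩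
      ext ω
      simp only [Set.preimage_compl, Set.mem_compl_iff, Set.mem_preimage, Set.mem_inter_iff,
        heA, heB, dif_pos h0, dif_pos h1]
    have hpreB : (fun ω (i : T) => X i ω) ⁻¹' sBᶜ = (X (0, m + 1) ⁻¹' s ∩ X (m + 1, n) ⁻¹' s)ᶜ := by
      rfl
    -- split the intersection
    have hsplit : (⋂ k ∈ Finset.Icc 1 (m + 1), (X (0, k) ⁻¹' s ∩ X (k, n) ⁻¹' s)ᶜ)
        = ((fun ω (i : S) => X i ω) ⁻¹' sA) ∩ ((fun ω (i : T) => X i ω) ⁻¹' sBᶜ) := by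
      rw [hpreA, hpreB, show Finset.Icc 1 (m + 1) = insert (m + 1) (Finset.Icc 1 m) by
        rw [← Finset.insert_Icc_right_eq_Icc_add_one (by omega)]]
      rw [Finset.set_biInter_insert]
      exact Set.inter_comm _ _
    rw [hsplit, hIF.measure_inter_preimage_eq_mul sA sBᶜ hsAm hsBm.compl, hpreA, hpreB]
    -- measure of the new event
    have hpair : μ (X (0, m + 1) ⁻¹' s ∩ X (m + 1, n) ⁻¹' s) = q ^ 2 := by
      have hne : ((0 : ℕ), m + 1) ≠ ((m + 1 : ℕ), n) := by
        intro h; injection h with h1 h2; omega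
      rw [(hindep.indepFun hne).measure_inter_preimage_eq_mul s s hs hs, hq, hq, sq]
    have hcompl : μ (X (0, m + 1) ⁻¹' s ∩ X (m + 1, n) ⁻¹' s)ᶜ = 1 - q ^ 2 := by
      rw [measure_compl (((hmeas _) hs).inter ((hmeas _) hs)) (measure_ne_top μ _), hpair,
        measure_univ]
    rw [ih, hcompl]
    ring

/-- if the essential supremum `L` of `F` satisfies `-∞ < L ≤ 0`, then `W_n`
converges in distribution to `max(w, 2L)` where `w` has law `F`: for every bounded
continuous test function the expectations converge. -/
theorem lpp_weak_convergence_of_nonpos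
    {Ω : Type} [MeasurableSpace Ω] (μ : Measure Ω) [IsProbabilityMeasure μ]
    (F : Measure EReal) [IsProbabilityMeasure F] (hFtop : F {⊤} = 0)
    (X : ℕ × ℕ → Ω → EReal)
    (hmeas : ∀ p, Measurable (X p))
    (hindep : iIndepFun X μ)
    (hlaw : ∀ p, μ.map (X p) = F)
    (L : ℝ)
    (hL1 : F {x : EReal | (L : EReal) < x} = 0)
    (hL2 : ∀ z : ℝ, z < L → F {x : EReal | (z : EReal) < x} ≠ 0)
    (hL0 : L ≤ 0) :
    ∀ f : BoundedContinuousFunction EReal ℝ,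
      Filter.Tendsto
        (fun n : ℕ => ∫ ω, f (maxCharge (fun i j => X (i, j) ω) 0 n) ∂μ)
        Filter.atTop
        (nhds (∫ x, f (max x ((2 * L : ℝ) : EReal)) ∂F)) := by
  intro f
  set tL : EReal := ((2 * L : ℝ) : EReal) with htL
  rw [Metric.tendsto_atTop]
  intro ε hε
  have hε4 : (0 : ℝ) < ε / 4 := by linarith
  -- continuity of `f` at the point `tL`
  obtain ⟨c, hcL, hc_close⟩ : ∃ c : ℝ, c < L ∧
      ∀ y : EReal, ((2 * c : ℝ) : EReal) ≤ y → y ≤ tL → |f y - f tL| ≤ ε / 4 := by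
    have hcont : ContinuousAt f tL := f.continuous.continuousAt
    have hV : f ⁻¹' Metric.ball (f tL) (ε / 4) ∈ nhds tL :=
      hcont.preimage_mem_nhds (Metric.ball_mem_nhds _ hε4)
    obtain ⟨l, u, hmem, hsub⟩ :=
      (mem_nhds_iff_exists_Ioo_subset' ⟨⊥, by rw [htL]; exact EReal.bot_lt_coe _⟩
        ⟨⊤, by rw [htL]; exact EReal.coe_lt_top _⟩).mp hV
    obtain ⟨z, hlz, hz2⟩ := EReal.exists_between_coe_real hmem.1
    have hz2' : z < 2 * L := by
      rw [htL] at hz2; exact_mod_cast hz2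
    refine ⟨max (z / 2) (L - 1), max_lt (by linarith) (by linarith), ?_⟩
    intro y h1 h2
    have hzc : (z : ℝ) ≤ 2 * max (z / 2) (L - 1) := by
      have : z / 2 ≤ max (z / 2) (L - 1) := le_max_left _ _
      linarith
    have hy1 : l < y := lt_of_lt_of_le hlz (le_trans (by exact_mod_cast hzc) h1)
    have hy2 : y < u := lt_of_le_of_lt h2 hmem.2
    have := hsub ⟨hy1, hy2⟩
    rw [Set.mem_preimage, Metric.mem_ball, Real.dist_eq] at this
    exact this.le
  -- the probability of seeing a large value
  set s : Set EReal := Set.Ioi ((c : ℝ) : EReal) with hs_def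
  have hs : MeasurableSet s := measurableSet_Ioi
  set q : ℝ≥0∞ := F s with hq_def
  have hq0 : q ≠ 0 := hL2 c hcL
  have hXq : ∀ p, μ (X p ⁻¹' s) = q := by
    intro p
    rw [← Measure.map_apply (hmeas p) hs, hlaw p]
  set r : ℝ≥0∞ := 1 - q ^ 2 with hr_def
  have hrle : r ≤ 1 := tsub_le_self
  have hrtop : r ≠ ⊤ := (lt_of_le_of_lt hrle ENNReal.one_lt_top).ne
  have hr1 : r < 1 := ENNReal.sub_lt_self ENNReal.one_ne_top one_ne_zero (pow_ne_zero 2 hq0)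
  set ρ : ℝ := r.toReal with hρ_def
  have hρ0 : (0 : ℝ) ≤ ρ := ENNReal.toReal_nonneg
  have hρ1 : ρ < 1 := by
    have := (ENNReal.toReal_lt_toReal hrtop ENNReal.one_ne_top).mpr hr1
    simpa using this
  -- choice of N
  have htend : Tendsto (fun n : ℕ => 2 * ‖f‖ * ρ ^ (n - 1)) atTop (nhds 0) := by
    have h1 : Tendsto (fun m : ℕ => ρ ^ m) atTop (nhds 0) :=
      tendsto_pow_atTop_nhds_zero_of_lt_one hρ0 hρ1
    have h2 : Tendsto (fun n : ℕ => n - 1) atTop atTop := tendsto_sub_atTop_nat 1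
    have := (h1.comp h2).const_mul (2 * ‖f‖)
    simpa using this
  have hev : ∀ᶠ n in atTop, 2 * ‖f‖ * ρ ^ (n - 1) < ε / 2 :=
    htend.eventually_lt_const (by linarith)
  obtain ⟨N₀, hN₀⟩ := eventually_atTop.mp hev
  refine ⟨max N₀ 2, fun n hn => ?_⟩
  have hn2 : 2 ≤ n := le_trans (le_max_right _ _) hn
  have hnN : N₀ ≤ n := le_trans (le_max_left _ _) hn
  have hn0 : 0 < n := by omega
  -- the bad event
  set Nset : Set Ω := ⋃ p : ℕ × ℕ, X p ⁻¹' Set.Ioi ((L : ℝ) : EReal) with hNset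
  set Kset : Set Ω := ⋂ k ∈ Finset.Icc 1 (n - 1), (X (0, k) ⁻¹' s ∩ X (k, n) ⁻¹' s)ᶜ with hKset
  have hNmeas : MeasurableSet Nset := MeasurableSet.iUnion fun p => hmeas p measurableSet_Ioi
  have hKmeas : MeasurableSet Kset :=
    MeasurableSet.biInter (Finset.Icc 1 (n - 1)).countable_toSet fun k _ =>
      (((hmeas _) hs).inter ((hmeas _) hs)).compl
  set Bad : Set Ω := Nset ∪ Kset with hBad_def
  have hBmeas : MeasurableSet Bad := hNmeas.union hKmeas
  have hN0 : μ Nset = 0 := by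
    rw [hNset]
    apply measure_iUnion_null
    intro p
    rw [← Measure.map_apply (hmeas p) measurableSet_Ioi, hlaw p]
    exact hL1
  have hK : μ Kset = r ^ (n - 1) :=
    measure_biInter_compl_events μ X hmeas hindep n s hs q hXq (n - 1)
  have hBad : μ Bad ≤ r ^ (n - 1) := by
    refine le_trans (measure_union_le _ _) ?_
    rw [hN0, hK, zero_add]
  have hBadR : (μ Bad).toReal ≤ ρ ^ (n - 1) := by
    have hpow : (r ^ (n - 1) : ℝ≥0∞) ≠ ⊤ := ENNReal.pow_ne_top hrtop
    have := ENNReal.toReal_mono hpow hBad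
    rwa [ENNReal.toReal_pow] at this
  -- the random variables
  set W : Ω → EReal := fun ω => maxCharge (fun i j => X (i, j) ω) 0 n with hW
  have hWmeas : Measurable W := measurable_maxCharge X hmeas 0 n
  have hg1m : AEStronglyMeasurable (fun ω => f (W ω)) μ :=
    (f.continuous.measurable.comp hWmeas).aestronglyMeasurable
  have hg2m : AEStronglyMeasurable (fun ω => f (max (X (0, n) ω) tL)) μ :=
    (f.continuous.measurable.comp ((hmeas (0, n)).max measurable_const)).aestronglyMeasurable
  have hg1i : Integrable (fun ω => f (W ω)) μ :=
    (integrable_const ‖f‖).mono' hg1m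
      (Eventually.of_forall fun ω => f.norm_coe_le_norm _)
  have hg2i : Integrable (fun ω => f (max (X (0, n) ω) tL)) μ :=
    (integrable_const ‖f‖).mono' hg2m
      (Eventually.of_forall fun ω => f.norm_coe_le_norm _)
  -- identify the limit with an integral over Ω
  have hT : ∫ x, f (max x tL) ∂F = ∫ ω, f (max (X (0, n) ω) tL) ∂μ := by
    rw [← hlaw (0, n)]
    exact integral_map (hmeas (0, n)).aemeasurable
      (f.continuous.comp (continuous_id.max continuous_const)).aestronglyMeasurable
  -- pointwise bound
  have hptwise : ∀ ω, ‖f (W ω) - f (max (X (0, n) ω) tL)‖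
      ≤ ε / 4 + Bad.indicator (fun _ => 2 * ‖f‖) ω := by
    intro ω
    by_cases hω : ω ∈ Bad
    · rw [Set.indicator_of_mem hω]
      have h1 : ‖f (W ω) - f (max (X (0, n) ω) tL)‖ ≤ ‖f‖ + ‖f‖ :=
        le_trans (norm_sub_le _ _) (add_le_add (f.norm_coe_le_norm _) (f.norm_coe_le_norm _))
      linarith
    · rw [Set.indicator_of_notMem hω, add_zero]
      rw [hBad_def, Set.mem_union] at hω
      push_neg at hω
      obtain ⟨hωN, hωK⟩ := hω
      have hall : ∀ i j : ℕ, X (i, j) ω ≤ (L : EReal) := by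
        intro i j
        by_contra hlt
        exact hωN (Set.mem_iUnion.mpr ⟨(i, j), Set.mem_Ioi.mpr (lt_of_not_ge hlt)⟩)
      have hex : ∃ k ∈ Finset.Icc 1 (n - 1),
          ω ∈ X (0, k) ⁻¹' s ∩ X (k, n) ⁻¹' s := by
        by_contra h
        push_neg at h
        exact hωK (Set.mem_biInter fun k hk => h k hk)
      obtain ⟨k, hk, hωk⟩ := hex
      obtain ⟨hk1, hk2⟩ := Finset.mem_Icc.mp hk
      have hk1' : 0 < k := by omega
      have hk2' : k < n := by omega
      have hWle : W ω ≤ max (X (0, n) ω) tL := by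
        have := maxCharge_le (w := fun i j => X (i, j) ω) hall hL0 hn0
        exact this
      have hW1 : X (0, n) ω ≤ W ω := by
        have := le_maxCharge_of_isPath (w := fun i j => X (i, j) ω) (isPath_pair hn0)
        rw [pathCharge_cons, pathCharge_single, add_zero] at this
        exact this
      have h2c : ((2 * c : ℝ) : EReal) = (c : EReal) + (c : EReal) := by
        rw [← EReal.coe_add]
        norm_num [two_mul]
      have hW2 : ((2 * c : ℝ) : EReal) ≤ W ω := by
        have hp := le_maxCharge_of_isPath (w := fun i j => X (i, j) ω)
          (isPath_triple hk1' hk2')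
        rw [pathCharge_cons, pathCharge_cons, pathCharge_single, add_zero] at hp
        calc ((2 * c : ℝ) : EReal) = (c : EReal) + (c : EReal) := h2c
          _ ≤ X (0, k) ω + X (k, n) ω :=
            add_le_add (le_of_lt hωk.1) (le_of_lt hωk.2)
          _ ≤ W ω := hp
      rcases le_total tL (X (0, n) ω) with hx | hx
      · have hmax : max (X (0, n) ω) tL = X (0, n) ω := max_eq_left hx
        have hWeq : W ω = X (0, n) ω := le_antisymm (by rwa [hmax] at hWle) hW1
        rw [hmax, hWeq, sub_self, norm_zero]
        linarith
      · have hmax : max (X (0, n) ω) tL = tL := max_eq_right hx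
        have := hc_close (W ω) hW2 (by rwa [hmax] at hWle)
        rw [hmax]
        simpa [Real.norm_eq_abs] using this
  -- put everything together
  have hboundi : Integrable (fun ω => ε / 4 + Bad.indicator (fun _ => 2 * ‖f‖) ω) μ :=
    (integrable_const _).add ((integrable_const _).indicator hBmeas)
  rw [hT, Real.dist_eq, ← integral_sub hg1i hg2i]
  calc |∫ ω, (f (W ω) - f (max (X (0, n) ω) tL)) ∂μ|
      ≤ ∫ ω, (ε / 4 + Bad.indicator (fun _ => 2 * ‖f‖) ω) ∂μ := by
        rw [← Real.norm_eq_abs]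
        exact norm_integral_le_of_norm_le hboundi (Eventually.of_forall hptwise)
    _ = ε / 4 + 2 * ‖f‖ * (μ Bad).toReal := by
        rw [integral_add (integrable_const _) ((integrable_const _).indicator hBmeas),
          integral_const, integral_indicator_const _ hBmeas]
        simp [measure_univ, smul_eq_mul]
        rw [measureReal_def]
        ring
    _ ≤ ε / 4 + 2 * ‖f‖ * ρ ^ (n - 1) := by
        have h2f : (0 : ℝ) ≤ 2 * ‖f‖ := by positivity
        nlinarith [mul_le_mul_of_nonneg_left hBadR h2f]
    _ < ε := by
        have := hN₀ n hnN
        linarith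
end
end

section
/- Let F be a probability distribution on ℝ ∪ {−∞} whose essential supremum equals 1, i.e., F([1−ε,1]) > 0 for all ε > 0 and F((1,∞)) = 0, and let (w_{i,j}, 0 ≤ i < j) be i.i.d. random variables with law F. Then the almost sure limit C(F) := lim_{n→∞} W_n/n is strictly positive. -/
open MeasureTheory ProbabilityTheory Filter
open scoped ENNReal NNReal

noncomputable section

/-- the greedy walk list: `u, nxt u, nxt (nxt u), …` with `j` steps. -/
def walkList (nxt : ℕ → ℕ) : ℕ → ℕ → List ℕ
  | u, 0 => [u]
  | u, (j+1) => u :: walkList nxt (nxt u) j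

lemma walkList_head (nxt : ℕ → ℕ) (u j : ℕ) : (walkList nxt u j).head? = some u := by
  cases j <;> rfl

lemma walkList_chain (nxt : ℕ → ℕ) (h : ∀ u, u < nxt u) :
    ∀ (j u : ℕ), (walkList nxt u j).Chain' (· < ·) := by
  intro j
  induction j with
  | zero => intro u; simp [walkList, List.Chain', List.isChain_singleton]
  | succ j ih =>
    intro u
    rw [show walkList nxt u (j+1) = u :: walkList nxt (nxt u) j from rfl,
      show List.Chain' (· < ·) (u :: walkList nxt (nxt u) j) ↔ List.IsChain (· < ·) (u :: walkList nxt (nxt u) j) from Iff.rfl, List.isChain_cons]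
    exact ⟨fun b hb => by rw [walkList_head] at hb; cases hb; exact h u, ih (nxt u)⟩

lemma walkList_last (nxt : ℕ → ℕ) :
    ∀ (j u : ℕ), (walkList nxt u j).getLast? = some (nxt^[j] u) := by
  intro j
  induction j with
  | zero => intro u; simp [walkList]
  | succ j ih =>
    intro u
    have h2 : walkList nxt u (j+1) = u :: walkList nxt (nxt u) j := rfl
    cases j with
    | zero => simp [walkList]
    | succ j' =>
      rw [h2, show walkList nxt (nxt u) (j'+1) = nxt u :: walkList nxt (nxt (nxt u)) j' from rfl,
        List.getLast?_cons_cons,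
        show (nxt u :: walkList nxt (nxt (nxt u)) j') = walkList nxt (nxt u) (j'+1) from rfl,
        ih (nxt u), Function.iterate_succ_apply]
      simp [Function.iterate_succ_apply]

lemma walkList_charge (w : ℕ → ℕ → EReal) (nxt : ℕ → ℕ)
    (h : ∀ u, ((2⁻¹ : ℝ) : EReal) ≤ w u (nxt u)) :
    ∀ (j u : ℕ), (((j : ℝ) * 2⁻¹ : ℝ) : EReal) ≤ pathCharge w (walkList nxt u j) := by
  intro j
  induction j with
  | zero => intro u; simp [walkList, pathCharge]
  | succ j ih =>
    intro u
    have hsplit : pathCharge w (walkList nxt u (j+1))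
        = w u (nxt u) + pathCharge w (walkList nxt (nxt u) j) := by
      cases j <;> rfl
    have hco : ((((j+1:ℕ) : ℝ) * 2⁻¹ : ℝ) : EReal)
        = ((2⁻¹ : ℝ) : EReal) + (((j : ℝ) * 2⁻¹ : ℝ) : EReal) := by
      rw [← EReal.coe_add]; congr 1; push_cast; ring
    rw [hsplit, hco]
    exact add_le_add (h u) (ih (nxt u))

lemma lintegral_nat_eq_tsum {Ω : Type} [MeasurableSpace Ω] (μ : Measure Ω) (f : Ω → ℕ)
    (hf : ∀ t : ℕ, MeasurableSet {ω | t < f ω}) :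
    ∫⁻ ω, (f ω : ℝ≥0∞) ∂μ = ∑' t : ℕ, μ {ω | t < f ω} := by
  have h1 : ∀ ω, (f ω : ℝ≥0∞)
      = ∑' t : ℕ, Set.indicator {ω' | t < f ω'} (fun _ => (1 : ℝ≥0∞)) ω := by
    intro ω
    rw [tsum_eq_sum (s := Finset.range (f ω))
      (fun t ht => Set.indicator_of_notMem (by simpa using ht) _)]
    rw [Finset.sum_congr rfl (fun t ht => Set.indicator_of_mem (by simpa using ht) _)]
    simp
  simp_rw [h1]
  rw [lintegral_tsum (fun t => (measurable_const.indicator (hf t)).aemeasurable)]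
  exact tsum_congr fun t => lintegral_indicator_one (hf t)

/-- if `F` has essential supremum `1` (i.e. `F([1-ε,1]) > 0` for all `ε > 0`
and `F((1,∞)) = 0`), then the a.s. limit `C(F)` of `W_n/n` is strictly positive. -/
theorem lpp_constant_pos
    {Ω : Type} [MeasurableSpace Ω] (μ : Measure Ω) [IsProbabilityMeasure μ]
    (F : Measure EReal) [IsProbabilityMeasure F] (hFtop : F {⊤} = 0)
    (X : ℕ × ℕ → Ω → EReal)
    (hmeas : ∀ p, Measurable (X p))
    (hindep : iIndepFun X μ)
    (hlaw : ∀ p, μ.map (X p) = F)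
    (hF1 : ∀ ε : ℝ, 0 < ε → 0 < F (Set.Icc ((1 - ε : ℝ) : EReal) 1))
    (hF2 : F {x : EReal | 1 < x} = 0)
    (C : EReal)
    (hC : ∀ᵐ ω ∂μ, Filter.Tendsto
      (fun n : ℕ => (((n : ℝ)⁻¹ : ℝ) : EReal) * maxCharge (fun i j => X (i, j) ω) 0 n)
      Filter.atTop (nhds C)) :
    0 < C := by
  classical
  set aE : EReal := ((2⁻¹ : ℝ) : EReal) with haE
  set q : ℝ≥0∞ := F (Set.Ici aE) with hq_def
  set r : ℝ≥0∞ := F (Set.Iio aE) with hr_def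
  have hq0 : 0 < q := by
    have h12 : ((1 - 2⁻¹ : ℝ) : EReal) = aE := by norm_num [haE]
    refine lt_of_lt_of_le (hF1 2⁻¹ (by norm_num)) (measure_mono ?_)
    rw [h12]
    exact Set.Icc_subset_Ici_self
  have hqtop : q ≠ ⊤ := measure_ne_top F _
  have hq1 : q ≤ 1 := prob_le_one
  have hr1q : r = 1 - q := by
    rw [hr_def, hq_def, ← Set.compl_Ici,
      measure_compl measurableSet_Ici (measure_ne_top F _), measure_univ]
  have hrlt1 : r < 1 := by
    rw [hr1q]; exact ENNReal.sub_lt_self ENNReal.one_ne_top one_ne_zero hq0.ne'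
  have h1r : (1 : ℝ≥0∞) - r = q := by
    rw [hr1q]; exact ENNReal.sub_sub_cancel ENNReal.one_ne_top hq1
  -- choose the truncation level `L`
  obtain ⟨L, hL1, hrL⟩ : ∃ L : ℕ, 1 ≤ L ∧ r ^ L ≤ q * 4⁻¹ := by
    have h4 : (0 : ℝ≥0∞) < q * 4⁻¹ := ENNReal.mul_pos hq0.ne' (by norm_num)
    have h5 := (ENNReal.tendsto_pow_atTop_nhds_zero_of_lt_one hrlt1).eventually_lt_const h4
    rw [eventually_atTop] at h5
    obtain ⟨L0, hL0⟩ := h5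
    exact ⟨max L0 1, le_max_right _ _, (hL0 _ (le_max_left _ _)).le⟩
  -- the product formula for edges out of a fixed vertex
  have prodf : ∀ (v m : ℕ) (sets : ℕ → Set EReal), (∀ j, MeasurableSet (sets j)) →
      μ (⋂ j ∈ Finset.range m, X (v, v + 1 + j) ⁻¹' sets j)
        = ∏ j ∈ Finset.range m, F (sets j) := by
    intro v m sets hsets
    have harith : ∀ k : ℕ, v + 1 + k - v - 1 = k := fun k => by omega
    have hinj : ∀ a ∈ Finset.range m, ∀ b ∈ Finset.range m,
        (fun k => ((v, v + 1 + k) : ℕ × ℕ)) a = (fun k => ((v, v + 1 + k) : ℕ × ℕ)) b → a = b := by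
      intro a _ b _ hab
      simp only [Prod.mk.injEq] at hab
      omega
    calc μ (⋂ j ∈ Finset.range m, X (v, v + 1 + j) ⁻¹' sets j)
        = μ (⋂ p ∈ (Finset.range m).image (fun k => ((v, v + 1 + k) : ℕ × ℕ)),
            X p ⁻¹' sets (p.2 - v - 1)) := by
          rw [Finset.set_biInter_finset_image]
          exact congrArg μ (Set.iInter₂_congr fun j _ => by rw [harith j]).symm
      _ = ∏ p ∈ (Finset.range m).image (fun k => ((v, v + 1 + k) : ℕ × ℕ)),
            μ (X p ⁻¹' sets (p.2 - v - 1)) :=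
          hindep.measure_inter_preimage_eq_mul _ (fun p _ => hsets _)
      _ = ∏ j ∈ Finset.range m, μ (X (v, v + 1 + j) ⁻¹' sets (v + 1 + j - v - 1)) :=
          Finset.prod_image hinj
      _ = ∏ j ∈ Finset.range m, F (sets j) := Finset.prod_congr rfl fun j _ => by
            rw [harith j, ← hlaw (v, v + 1 + j), Measure.map_apply (hmeas _) (hsets j)]
  have hbad : ∀ v m : ℕ, μ (⋂ j ∈ Finset.range m, X (v, v + 1 + j) ⁻¹' Set.Iio aE) = r ^ m := by
    intro v m
    rw [prodf v m _ (fun _ => measurableSet_Iio), Finset.prod_const, Finset.card_range]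
  have hcore : ∀ v k : ℕ, μ ((X (v, v + 1 + k) ⁻¹' Set.Ici aE)
      ∩ ⋂ j ∈ Finset.range k, X (v, v + 1 + j) ⁻¹' Set.Iio aE) = q * r ^ k := by
    intro v k
    have h := prodf v (k + 1) (fun j => if j = k then Set.Ici aE else Set.Iio aE)
      (fun j => by by_cases h : j = k <;> simp [h, measurableSet_Ici, measurableSet_Iio])
    rw [Finset.range_add_one, Finset.set_biInter_insert,
      Finset.prod_insert Finset.notMem_range_self] at h
    simp only [eq_self_iff_true, if_true] at h
    rw [show (⋂ j ∈ Finset.range k, X (v, v + 1 + j) ⁻¹'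
          (if j = k then Set.Ici aE else Set.Iio aE))
        = ⋂ j ∈ Finset.range k, X (v, v + 1 + j) ⁻¹' Set.Iio aE from
        Set.iInter₂_congr fun j hj => by rw [if_neg (Finset.mem_range.1 hj).ne]] at h
    rw [h, Finset.prod_congr rfl (fun j hj => by rw [if_neg (Finset.mem_range.1 hj).ne]),
      Finset.prod_const, Finset.card_range]
  -- almost surely, from every vertex there is a good edge
  have hnull : ∀ v : ℕ, μ ((⋃ k : ℕ, X (v, v + 1 + k) ⁻¹' Set.Ici aE)ᶜ) = 0 := by
    intro v
    have hle : ∀ m : ℕ, μ ((⋃ k : ℕ, X (v, v + 1 + k) ⁻¹' Set.Ici aE)ᶜ) ≤ r ^ m := by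
      intro m
      refine le_trans (measure_mono ?_) (hbad v m).le
      intro ω hω
      simp only [Set.mem_compl_iff, Set.mem_iUnion, Set.mem_preimage, Set.mem_Ici,
        not_exists, not_le] at hω
      exact Set.mem_iInter₂.2 fun j _ => hω j
    exact le_zero_iff.1 (ge_of_tendsto'
      (ENNReal.tendsto_pow_atTop_nhds_zero_of_lt_one hrlt1) hle)
  have hE1 : ∀ᵐ ω ∂μ, ∀ v : ℕ, ∃ k : ℕ, aE ≤ X (v, v + 1 + k) ω := by
    rw [ae_all_iff]
    intro v
    rw [ae_iff]
    convert hnull v using 2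
    ext ω
    simp [Set.mem_iUnion]
  -- the first good edge out of `v`, and its excess over `L`
  set N : ℕ → Ω → ℕ :=
    fun v ω => if h : ∃ k : ℕ, aE ≤ X (v, v + 1 + k) ω then Nat.find h else 0 with hN_def
  set Mv : ℕ → MeasurableSpace Ω :=
    fun v => ⨆ k : ℕ, MeasurableSpace.comap (X (v, v + 1 + k)) inferInstance with hMv_def
  have hMvle : ∀ v, Mv v ≤ (inferInstance : MeasurableSpace Ω) :=
    fun v => iSup_le fun k => (hmeas _).comap_le
  have hA : ∀ v k, MeasurableSet[Mv v] (X (v, v + 1 + k) ⁻¹' Set.Ici aE) := by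
    intro v k
    have h1 : MeasurableSet[MeasurableSpace.comap (X (v, v + 1 + k)) inferInstance]
        (X (v, v + 1 + k) ⁻¹' Set.Ici aE) := ⟨Set.Ici aE, measurableSet_Ici, rfl⟩
    exact le_iSup (fun k => MeasurableSpace.comap (X (v, v + 1 + k)) inferInstance) k _ h1
  have hNmeasM : ∀ v, Measurable[Mv v] (N v) := by
    intro v
    apply @measurable_to_countable' ℕ Ω _ _ (Mv v) (N v)
    intro k
    have hpre : N v ⁻¹' {k} = {ω | N v ω = k} := by ext ω; simp
    rw [hpre]
    rcases Nat.eq_zero_or_pos k with hk0 | hkpos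
    · subst hk0
      have hset : {ω | N v ω = 0} = (X (v, v + 1 + 0) ⁻¹' Set.Ici aE)
          ∪ (⋃ j : ℕ, X (v, v + 1 + j) ⁻¹' Set.Ici aE)ᶜ := by
        ext ω
        constructor
        · intro hω
          have hω' : N v ω = 0 := hω
          by_cases h : ∃ k : ℕ, aE ≤ X (v, v + 1 + k) ω
          · left
            have hNe : N v ω = Nat.find h := by simp only [hN_def, dif_pos h]
            have h0 : Nat.find h = 0 := by rw [← hNe]; exact hω'
            have hsp := Nat.find_spec h
            rw [h0] at hsp
            exact hsp
          · right
            intro hj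
            rcases hj with ⟨s, ⟨j, rfl⟩, hj2⟩
            exact h ⟨j, hj2⟩
        · intro hω
          rcases hω with h1 | h2
          · have h1' : aE ≤ X (v, v + 1 + 0) ω := h1
            have hex : ∃ k : ℕ, aE ≤ X (v, v + 1 + k) ω := ⟨0, h1'⟩
            show N v ω = 0
            simp only [hN_def, dif_pos hex]
            exact (Nat.find_eq_zero hex).2 h1'
          · have h2' : ¬ ∃ k : ℕ, aE ≤ X (v, v + 1 + k) ω := by
              intro ⟨k0, hk0⟩
              exact h2 (Set.mem_iUnion.2 ⟨k0, hk0⟩)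
            show N v ω = 0
            simp only [hN_def, dif_neg h2']
      rw [hset]
      exact (hA v 0).union (MeasurableSet.compl (MeasurableSet.iUnion fun j => hA v j))
    · have hset : {ω | N v ω = k} = (X (v, v + 1 + k) ⁻¹' Set.Ici aE)
          ∩ ⋂ j : ℕ, ⋂ (_ : j < k), (X (v, v + 1 + j) ⁻¹' Set.Ici aE)ᶜ := by
        ext ω
        constructor
        · intro hω
          have hω' : N v ω = k := hω
          have hex : ∃ k : ℕ, aE ≤ X (v, v + 1 + k) ω := by
            by_contra h
            have h0 : N v ω = 0 := by simp only [hN_def, dif_neg h]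
            omega
          have hNe : N v ω = Nat.find hex := by simp only [hN_def, dif_pos hex]
          have hfind : Nat.find hex = k := by rw [← hNe]; exact hω'
          rw [Nat.find_eq_iff] at hfind
          exact ⟨hfind.1, Set.mem_iInter.2 fun j => Set.mem_iInter.2 fun hj => hfind.2 j hj⟩
        · rintro ⟨h1, h2⟩
          have hex : ∃ k : ℕ, aE ≤ X (v, v + 1 + k) ω := ⟨k, h1⟩
          show N v ω = k
          simp only [hN_def, dif_pos hex]
          rw [Nat.find_eq_iff hex]
          exact ⟨h1, fun n hn => Set.mem_iInter.1 (Set.mem_iInter.1 h2 n) hn⟩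
      rw [hset]
      exact (hA v k).inter
        (MeasurableSet.iInter fun j => MeasurableSet.iInter fun _ => (hA v j).compl)
  have hNmeas : ∀ v, Measurable (N v) := fun v => (hNmeasM v).mono (hMvle v) le_rfl
  set Z : ℕ → Ω → ℝ := fun v ω => ((N v ω + 1 - L : ℕ) : ℝ) with hZ_def
  have hZmeasM : ∀ v, Measurable[Mv v] (Z v) :=
    fun v => (measurable_from_top (f := fun n : ℕ => ((n + 1 - L : ℕ) : ℝ))).comp (hNmeasM v)
  have hZmeas : ∀ v, Measurable (Z v) := fun v => (hZmeasM v).mono (hMvle v) le_rfl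
  -- independence
  have hZindep : Pairwise (Function.onFun (fun f g => IndepFun f g μ) Z) := by
    intro u v huv
    have hD : Disjoint {p : ℕ × ℕ | p.1 = u} {p : ℕ × ℕ | p.1 = v} := by
      rw [Set.disjoint_left]
      intro p hp1 hp2
      exact huv (hp1.symm.trans hp2)
    have hbig : Indep (⨆ p ∈ {p : ℕ × ℕ | p.1 = u}, MeasurableSpace.comap (X p) inferInstance)
        (⨆ p ∈ {p : ℕ × ℕ | p.1 = v}, MeasurableSpace.comap (X p) inferInstance) μ :=
      indep_iSup_of_disjoint (fun p => (hmeas p).comap_le) hindep hD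
    have hle : ∀ u0 : ℕ, Mv u0
        ≤ ⨆ p ∈ {p : ℕ × ℕ | p.1 = u0}, MeasurableSpace.comap (X p) inferInstance := by
      intro u0
      refine iSup_le fun k => ?_
      exact le_iSup₂ (f := fun (p : ℕ × ℕ) (_ : p ∈ {p : ℕ × ℕ | p.1 = u0}) =>
        MeasurableSpace.comap (X p) inferInstance) (u0, u0 + 1 + k) rfl
    exact indep_of_indep_of_le_left
      (indep_of_indep_of_le_right hbig (((hZmeasM v).comap_le).trans (hle v)))
      (((hZmeasM u).comap_le).trans (hle u))
  -- identical distribution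
  have hNk : ∀ v k, μ {ω | N v ω = k} = q * r ^ k := by
    intro v k
    have hsub1 : (X (v, v + 1 + k) ⁻¹' Set.Ici aE)
        ∩ (⋂ j ∈ Finset.range k, X (v, v + 1 + j) ⁻¹' Set.Iio aE) ⊆ {ω | N v ω = k} := by
      rintro ω ⟨h1, h2⟩
      have hex : ∃ k : ℕ, aE ≤ X (v, v + 1 + k) ω := ⟨k, h1⟩
      simp only [Set.mem_setOf_eq, hN_def, dif_pos hex, Nat.find_eq_iff hex]
      refine ⟨h1, fun n hn => not_le.2 ?_⟩
      have := Set.mem_iInter₂.1 h2 n (Finset.mem_range.2 hn)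
      exact this
    have hsub2 : {ω | N v ω = k} ⊆ ((X (v, v + 1 + k) ⁻¹' Set.Ici aE)
        ∩ ⋂ j ∈ Finset.range k, X (v, v + 1 + j) ⁻¹' Set.Iio aE)
        ∪ (⋃ j : ℕ, X (v, v + 1 + j) ⁻¹' Set.Ici aE)ᶜ := by
      intro ω hω
      by_cases hex : ∃ k : ℕ, aE ≤ X (v, v + 1 + k) ω
      · left
        simp only [Set.mem_setOf_eq, hN_def, dif_pos hex] at hω
        rw [Nat.find_eq_iff hex] at hω
        exact ⟨hω.1, Set.mem_iInter₂.2 fun j hj =>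
          not_le.1 (hω.2 j (Finset.mem_range.1 hj))⟩
      · right
        simp only [Set.mem_compl_iff, Set.mem_iUnion, not_exists]
        push_neg at hex
        exact fun j => not_le.2 (hex j)
    refine le_antisymm ?_ ?_
    · refine le_trans (measure_mono hsub2) ?_
      refine le_trans (measure_union_le _ _) ?_
      rw [hnull v, add_zero, hcore v k]
    · rw [← hcore v k]
      exact measure_mono hsub1
  have hNid : ∀ v, IdentDistrib (N v) (N 0) μ μ := by
    intro v
    refine ⟨(hNmeas v).aemeasurable, (hNmeas 0).aemeasurable, ?_⟩
    refine MeasureTheory.Measure.ext_of_singleton fun k => ?_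
    rw [Measure.map_apply (hNmeas v) (measurableSet_singleton k),
      Measure.map_apply (hNmeas 0) (measurableSet_singleton k)]
    show μ {ω | N v ω = k} = μ {ω | N 0 ω = k}
    rw [hNk v k, hNk 0 k]
  have hident : ∀ v, IdentDistrib (Z v) (Z 0) μ μ :=
    fun v => (hNid v).comp (measurable_from_top (f := fun n : ℕ => ((n + 1 - L : ℕ) : ℝ)))
  -- integrability and smallness of the mean
  have htail : ∀ t : ℕ, μ {ω | t < N 0 ω + 1 - L} ≤ r ^ (L + t) := by
    intro t
    refine le_trans (measure_mono ?_) (hbad 0 (L + t)).le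
    intro ω hω
    simp only [Set.mem_setOf_eq] at hω
    refine Set.mem_iInter₂.2 fun j hj => ?_
    simp only [Set.mem_preimage, Set.mem_Iio]
    by_contra hcon
    push_neg at hcon
    have hex : ∃ k : ℕ, aE ≤ X (0, 0 + 1 + k) ω := ⟨j, hcon⟩
    have hle : N 0 ω ≤ j := by
      simp only [hN_def, dif_pos hex]
      exact Nat.find_min' hex hcon
    have hjlt : j < L + t := Finset.mem_range.1 hj
    omega
  have hmeas_lt : ∀ t : ℕ, MeasurableSet {ω | t < N 0 ω + 1 - L} :=
    fun t => ((measurable_from_top (f := fun n : ℕ => n + 1 - L)).comp (hNmeas 0))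
      measurableSet_Ioi
  have hlint : ∫⁻ ω, ((N 0 ω + 1 - L : ℕ) : ℝ≥0∞) ∂μ ≤ 4⁻¹ := by
    rw [lintegral_nat_eq_tsum μ _ hmeas_lt]
    calc ∑' t : ℕ, μ {ω | t < N 0 ω + 1 - L} ≤ ∑' t : ℕ, r ^ (L + t) :=
          ENNReal.tsum_le_tsum htail
      _ = r ^ L * ∑' t : ℕ, r ^ t := by simp_rw [pow_add]; rw [ENNReal.tsum_mul_left]
      _ = r ^ L * (1 - r)⁻¹ := by rw [ENNReal.tsum_geometric]
      _ ≤ q * 4⁻¹ * q⁻¹ := by rw [h1r]; exact mul_le_mul_left hrL _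
      _ = 4⁻¹ * (q * q⁻¹) := by ring
      _ = 4⁻¹ := by rw [ENNReal.mul_inv_cancel hq0.ne' hqtop, mul_one]
  have hZnn : ∀ v ω, 0 ≤ Z v ω := fun v ω => Nat.cast_nonneg _
  have hZint : Integrable (Z 0) μ := by
    refine ⟨(hZmeas 0).aestronglyMeasurable, ?_⟩
    rw [hasFiniteIntegral_iff_norm]
    have heq : ∀ ω, ENNReal.ofReal ‖Z 0 ω‖ = ((N 0 ω + 1 - L : ℕ) : ℝ≥0∞) := by
      intro ω
      rw [hZ_def]
      simp only [Real.norm_natCast]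
      exact ENNReal.ofReal_natCast _
    calc ∫⁻ ω, ENNReal.ofReal ‖Z 0 ω‖ ∂μ
        = ∫⁻ ω, ((N 0 ω + 1 - L : ℕ) : ℝ≥0∞) ∂μ := lintegral_congr heq
      _ ≤ 4⁻¹ := hlint
      _ < ⊤ := by norm_num
  have hEZhalf : μ[Z 0] < 2⁻¹ := by
    have h1 : μ[Z 0] = (∫⁻ ω, ENNReal.ofReal (Z 0 ω) ∂μ).toReal :=
      integral_eq_lintegral_of_nonneg_ae (ae_of_all _ (hZnn 0))
        (hZmeas 0).aestronglyMeasurable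
    have h2 : ∫⁻ ω, ENNReal.ofReal (Z 0 ω) ∂μ ≤ 4⁻¹ := by
      refine le_trans (le_of_eq (lintegral_congr fun ω => ?_)) hlint
      rw [hZ_def]
      exact ENNReal.ofReal_natCast _
    rw [h1]
    calc (∫⁻ ω, ENNReal.ofReal (Z 0 ω) ∂μ).toReal ≤ ((4⁻¹ : ℝ≥0∞)).toReal :=
          ENNReal.toReal_mono (by norm_num) h2
      _ < 2⁻¹ := by norm_num
  have hSLLN := strong_law_ae_real Z hZint hZindep hident
  have hεhalf : ∀ᵐ ω ∂μ, ∀ᶠ n : ℕ in atTop,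
      (∑ i ∈ Finset.range n, Z i ω) / (n : ℝ) < 2⁻¹ :=
    hSLLN.mono fun ω hω => hω.eventually_lt_const hEZhalf
  -- pick a single good sample point
  haveI hne : (ae μ).NeBot := ae_neBot.2 (IsProbabilityMeasure.ne_zero μ)
  obtain ⟨ω, hCω, hSω, hE1ω⟩ := (hC.and (hεhalf.and hE1)).exists
  -- the greedy walk
  set nxt : ℕ → ℕ := fun u => u + 1 + N u ω with hnxt_def
  have hlt : ∀ u, u < nxt u := fun u => by simp only [hnxt_def]; omega
  have hedge : ∀ u, ((2⁻¹ : ℝ) : EReal) ≤ X (u, nxt u) ω := by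
    intro u
    have hex := hE1ω u
    show aE ≤ X (u, u + 1 + N u ω) ω
    have hNu : N u ω = Nat.find hex := by simp only [hN_def, dif_pos hex]
    rw [hNu]
    exact Nat.find_spec hex
  set v : ℕ → ℕ := fun j => nxt^[j] 0 with hv_def
  have hvsucc : ∀ j, v (j + 1) = nxt (v j) := fun j => Function.iterate_succ_apply' nxt j 0
  have hvmono : StrictMono v :=
    strictMono_nat_of_lt_succ fun j => by rw [hvsucc]; exact hlt (v j)
  have hvge : ∀ j, j ≤ v j := by
    intro j
    induction j with
    | zero => exact Nat.zero_le _
    | succ j ih =>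
      have h1 := hlt (v j)
      rw [← hvsucc j] at h1
      omega
  have hsum1 : ∀ j, v j ≤ L * j + ∑ i ∈ Finset.range j, (N (v i) ω + 1 - L) := by
    intro j
    induction j with
    | zero => simp [hv_def]
    | succ j ih =>
      rw [Finset.sum_range_succ, Nat.mul_succ]
      have h1 : v (j + 1) = v j + 1 + N (v j) ω := hvsucc j
      omega
  have hsum2 : ∀ j, ∑ i ∈ Finset.range j, (N (v i) ω + 1 - L)
      ≤ ∑ u ∈ Finset.range (v j), (N u ω + 1 - L) := by
    intro j
    have himg : ∑ u ∈ (Finset.range j).image v, (N u ω + 1 - L)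
        = ∑ i ∈ Finset.range j, (N (v i) ω + 1 - L) :=
      Finset.sum_image (fun a _ b _ h => hvmono.injective h)
    rw [← himg]
    apply Finset.sum_le_sum_of_subset
    intro u hu
    rw [Finset.mem_image] at hu
    obtain ⟨i, hi, rfl⟩ := hu
    exact Finset.mem_range.2 (hvmono (Finset.mem_range.1 hi))
  obtain ⟨n₀, hn₀⟩ := eventually_atTop.1 hSω
  have hkey : ∀ j, max n₀ 1 ≤ j → (v j : ℝ) ≤ 2 * L * j := by
    intro j hj
    have hj1 : 1 ≤ j := le_trans (le_max_right _ _) hj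
    have hvj1 : 1 ≤ v j := le_trans hj1 (hvge j)
    have hn : n₀ ≤ v j := le_trans (le_trans (le_max_left _ _) hj) (hvge j)
    have hS := hn₀ (v j) hn
    have hvpos : (0 : ℝ) < (v j : ℝ) := by exact_mod_cast hvj1
    have hSlt : (∑ i ∈ Finset.range (v j), Z i ω) < (v j : ℝ) * 2⁻¹ := by
      rw [div_lt_iff₀ hvpos] at hS
      linarith [hS]
    have hnat : (v j : ℕ) ≤ L * j + ∑ u ∈ Finset.range (v j), (N u ω + 1 - L) :=
      le_trans (hsum1 j) (by have := hsum2 j; omega)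
    have hcast : (v j : ℝ) ≤ (L : ℝ) * j + ∑ i ∈ Finset.range (v j), Z i ω := by
      have h2 : ((L * j + ∑ u ∈ Finset.range (v j), (N u ω + 1 - L) : ℕ) : ℝ)
          = (L : ℝ) * j + ∑ i ∈ Finset.range (v j), Z i ω := by
        push_cast
        rfl
      rw [← h2]
      exact_mod_cast hnat
    have hLj : (0:ℝ) ≤ (L : ℝ) * j := by positivity
    linarith [hcast, hSlt]
  -- lower bound for the max charge along the walk
  have hWn : ∀ j : ℕ, (((j : ℝ) * 2⁻¹ : ℝ) : EReal)
      ≤ maxCharge (fun i j => X (i, j) ω) 0 (v j) := by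
    intro j
    refine le_trans (walkList_charge (fun i j => X (i, j) ω) nxt (fun u => hedge u) j 0)
      (le_sSup ?_)
    exact ⟨walkList nxt 0 j,
      ⟨walkList_chain nxt hlt j 0, walkList_head nxt 0 j, walkList_last nxt j 0⟩, rfl⟩
  set c : ℝ := (4 * (L : ℝ))⁻¹ with hc_def
  have hL0 : (0 : ℝ) < (L : ℝ) := by exact_mod_cast hL1
  have hcpos : 0 < c := by rw [hc_def]; positivity
  have hfinal : ∀ᶠ j : ℕ in atTop, (c : EReal)
      ≤ (((v j : ℝ)⁻¹ : ℝ) : EReal) * maxCharge (fun i j => X (i, j) ω) 0 (v j) := by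
    rw [eventually_atTop]
    refine ⟨max n₀ 1, fun j hj => ?_⟩
    have hM := hWn j
    have hj1 : 1 ≤ j := le_trans (le_max_right _ _) hj
    have hvpos : (0 : ℝ) < (v j : ℝ) := by
      have := le_trans hj1 (hvge j); exact_mod_cast this
    have hjpos : (0 : ℝ) < (j : ℝ) := by exact_mod_cast hj1
    have hvle : (v j : ℝ) ≤ 2 * L * j := hkey j hj
    revert hM
    induction maxCharge (fun i j => X (i, j) ω) 0 (v j) using EReal.rec with
    | bot =>
      intro hM
      exact absurd (le_bot_iff.1 hM) (EReal.coe_ne_bot _)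
    | coe m =>
      intro hM
      rw [← EReal.coe_mul]
      rw [EReal.coe_le_coe_iff] at hM ⊢
      have h1 : (2 * L * j : ℝ)⁻¹ ≤ (v j : ℝ)⁻¹ := inv_anti₀ hvpos hvle
      calc c = (2 * L * j : ℝ)⁻¹ * ((j : ℝ) * 2⁻¹) := by
            rw [hc_def]; field_simp; ring
        _ ≤ (v j : ℝ)⁻¹ * m := by
            apply mul_le_mul h1 hM (by positivity) (by positivity)
    | top =>
      intro _
      rw [EReal.coe_mul_top_of_pos (inv_pos.2 hvpos)]
      exact le_top
  have htend : Tendsto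
      (fun j : ℕ => (((v j : ℝ)⁻¹ : ℝ) : EReal) * maxCharge (fun i j => X (i, j) ω) 0 (v j))
      atTop (nhds C) := hCω.comp hvmono.tendsto_atTop
  have hle := ge_of_tendsto htend hfinal
  calc (0 : EReal) < (c : EReal) := by exact_mod_cast hcpos
    _ ≤ C := hle
end
end

section
/- (Decoupling property.) Fix ℓ ∈ [0,1) and a positive integer n. Let (w(t), 1 ≤ t ≤ n) be elements of 𝒲 and let ν ∈ 𝒩₀ with ν₂ ≤ −ℓ. Define ν(0) = ν, ν̃(0) = δ₀, and ν(t) = Ψ_{w(t)} ν(t−1), ν̃(t) = Ψ_{w(t)} ν̃(t−1) for 1 ≤ t ≤ n. If for every 1 ≤ t ≤ n one has max{w₁(t), …, w_t(t)} ≥ 1 − ℓ, then 𝔪(ν(n−1), w(n)) = 𝔪(ν̃(n−1), w(n)). -/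
open MeasureTheory ProbabilityTheory Filter

noncomputable section

/-- Insert the value `m` into the nonincreasing sequence `ν`, keeping it nonincreasing. -/
def insertSeq (m : EReal) (ν : ℕ → EReal) : ℕ → EReal
  | 0 => max (ν 0) m
  | k + 1 => max (ν (k + 1)) (min (ν k) m)

/-- `𝔪(ν, w) = sup_k (ν_k + w_k)`. -/
def mgsM (ν w : ℕ → EReal) : EReal := ⨆ k, (ν k + w k)

/-- The MGS map `Ψ_w ν = ν + δ_{𝔪(ν,w)}`: insert the value `𝔪(ν,w)` into `ν`. -/
def Psi (w ν : ℕ → EReal) : ℕ → EReal := insertSeq (mgsM ν w) ν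

/-- `σν`: the sequence shifted so that its largest element sits at `0`, `(σν)_k = ν_k - ν_1`. -/
def shiftSeq (ν : ℕ → EReal) : ℕ → EReal := fun k => ν k - ν 0

/-- The point measure `δ₀` as a nonincreasing sequence: a single atom at `0`
(padded with `⊥`, meaning no further atoms). -/
def deltaZero : ℕ → EReal := fun k => if k = 0 then 0 else ⊥

/-- `ν ∈ 𝒩₀`: a nonincreasing, locally finite sequence of atoms (tending to `⊥`),
whose largest atom is at `0`.  Point measures in `𝒩` are encoded as their nonincreasing
sequence of atoms, padded with `⊥`. -/
def MemN0 (ν : ℕ → EReal) : Prop :=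
  Antitone ν ∧ ν 0 = 0 ∧ Filter.Tendsto ν Filter.atTop (nhds ⊥)

/-- The MGS dynamics started at `ν`: `ν(0) = ν` and `ν(t+1) = Ψ_{w(t+1)} ν(t)`. -/
def evolve (w : ℕ → ℕ → EReal) (ν : ℕ → EReal) : ℕ → (ℕ → EReal)
  | 0 => ν
  | t + 1 => Psi (w (t + 1)) (evolve w ν t)

lemma coe_arith (ℓ : ℝ) : ((-ℓ : ℝ) : EReal) + 1 = ((1 - ℓ : ℝ) : EReal) := by
  rw [show (1 : EReal) = ((1:ℝ):EReal) by norm_cast, ← EReal.coe_add]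
  congr 1
  ring

lemma mgs_eq_aux (ℓ : ℝ) (hℓ0 : 0 ≤ ℓ) (hℓ1 : ℓ < 1) (t : ℕ)
    (μ μ' wt : ℕ → EReal) (hw : ∀ k, wt k ≤ 1)
    (heq : ∀ k ≤ t, μ k = μ' k) (hpos : ∀ k ≤ t, (0:EReal) ≤ μ' k)
    (htail : ∀ k, t < k → μ k ≤ ((-ℓ:ℝ):EReal)) (htail' : ∀ k, t < k → μ' k = ⊥)
    (hj : ∃ j ≤ t, ((1-ℓ:ℝ):EReal) ≤ wt j) :
    mgsM μ wt = mgsM μ' wt := by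
  obtain ⟨j, hjt, hwj⟩ := hj
  have hbig : ((1-ℓ:ℝ):EReal) ≤ mgsM μ' wt := by
    calc ((1-ℓ:ℝ):EReal) ≤ wt j := hwj
    _ = 0 + wt j := (zero_add _).symm
    _ ≤ μ' j + wt j := add_le_add (hpos j hjt) le_rfl
    _ ≤ mgsM μ' wt := le_iSup (fun k => μ' k + wt k) j
  apply le_antisymm
  · refine iSup_le fun k => ?_
    by_cases hk : k ≤ t
    · rw [heq k hk]; exact le_iSup (fun k => μ' k + wt k) k
    · calc μ k + wt k ≤ ((-ℓ:ℝ):EReal) + 1 :=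
            add_le_add (htail k (not_le.1 hk)) (hw k)
      _ = ((1-ℓ:ℝ):EReal) := coe_arith ℓ
      _ ≤ mgsM μ' wt := hbig
  · refine iSup_le fun k => ?_
    by_cases hk : k ≤ t
    · rw [← heq k hk]; exact le_iSup (fun k => μ k + wt k) k
    · rw [htail' k (not_le.1 hk), EReal.bot_add]; exact bot_le

/-- Decoupling property: if `ν ∈ 𝒩₀` has `ν₂ ≤ -ℓ` and the charges satisfy
the triangular property `max{w₁(t), …, w_t(t)} ≥ 1 - ℓ` for `1 ≤ t ≤ n`, then
`𝔪(ν(n-1), w(n)) = 𝔪(ν̃(n-1), w(n))`, where `ν(·)` starts from `ν` and `ν̃(·)` from `δ₀`.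
(Here `w t k` stands for the paper's `w_{k+1}(t)`.) -/
theorem mgs_decoupling
    (ℓ : ℝ) (hℓ0 : 0 ≤ ℓ) (hℓ1 : ℓ < 1) (n : ℕ) (hn : 0 < n)
    (w : ℕ → ℕ → EReal) (hw : ∀ t k, w t k ≤ 1)
    (ν : ℕ → EReal) (hν : MemN0 ν) (hν2 : ν 1 ≤ ((-ℓ : ℝ) : EReal))
    (hbar : ∀ t, 1 ≤ t → t ≤ n → ∃ j < t, ((1 - ℓ : ℝ) : EReal) ≤ w t j)
    :
    mgsM (evolve w ν (n - 1)) (w n) = mgsM (evolve w deltaZero (n - 1)) (w n) := by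

  have hneg : ((-ℓ:ℝ):EReal) ≤ 0 := by exact_mod_cast neg_nonpos.2 hℓ0
  have hpos1 : (0:EReal) ≤ ((1-ℓ:ℝ):EReal) := by exact_mod_cast (by linarith : (0:ℝ) ≤ 1 - ℓ)
  have main : ∀ t, t ≤ n - 1 →
      (∀ k ≤ t, evolve w ν t k = evolve w deltaZero t k ∧ (0:EReal) ≤ evolve w deltaZero t k)
      ∧ (∀ k, t < k → evolve w ν t k ≤ ((-ℓ:ℝ):EReal) ∧ evolve w deltaZero t k = ⊥) := by
    intro t
    induction t with
    | zero =>
      intro _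
      constructor
      · intro k hk
        interval_cases k
        simp [evolve, deltaZero, hν.2.1]
      · intro k hk
        refine ⟨le_trans (hν.1 hk) hν2, ?_⟩
        simp [evolve, deltaZero, Nat.pos_iff_ne_zero.mp hk]
    | succ t ih =>
      intro hlt
      have ht : t ≤ n - 1 := le_of_lt (Nat.lt_of_lt_of_le (Nat.lt_succ_self t) hlt)
      obtain ⟨IH1, IH2⟩ := ih ht
      set μ := evolve w ν t with hμ
      set μ' := evolve w deltaZero t with hμ'
      have htn : t + 1 ≤ n := le_trans hlt (Nat.sub_le n 1)
      obtain ⟨j, hjlt, hwj⟩ := hbar (t+1) (Nat.succ_le_succ (Nat.zero_le t)) htn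
      have hjle : j ≤ t := Nat.lt_succ_iff.1 hjlt
      have hm : mgsM μ (w (t+1)) = mgsM μ' (w (t+1)) :=
        mgs_eq_aux ℓ hℓ0 hℓ1 t μ μ' (w (t+1)) (hw (t+1))
          (fun k hk => (IH1 k hk).1) (fun k hk => (IH1 k hk).2)
          (fun k hk => (IH2 k hk).1) (fun k hk => (IH2 k hk).2)
          ⟨j, hjle, hwj⟩
      have hmbig : ((1-ℓ:ℝ):EReal) ≤ mgsM μ' (w (t+1)) := by
        calc ((1-ℓ:ℝ):EReal) ≤ w (t+1) j := hwj
        _ = 0 + w (t+1) j := (zero_add _).symm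
        _ ≤ μ' j + w (t+1) j := add_le_add (IH1 j hjle).2 le_rfl
        _ ≤ _ := le_iSup (fun k => μ' k + w (t+1) k) j
      set m := mgsM μ' (w (t+1)) with hmdef
      have hm0 : (0:EReal) ≤ m := le_trans hpos1 hmbig
      have hEν : evolve w ν (t+1) = insertSeq m μ := by
        show Psi (w (t+1)) μ = _
        rw [Psi, hm]
      have hEδ : evolve w deltaZero (t+1) = insertSeq m μ' := by
        show Psi (w (t+1)) μ' = _
        rw [Psi]
      rw [hEν, hEδ]
      constructor
      · intro k hk
        match k with
        | 0 =>
          have h0 := IH1 0 (Nat.zero_le t)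
          simp only [insertSeq, h0.1]
          exact ⟨trivial, le_trans h0.2 (le_max_left _ _)⟩
        | (j'+1) =>
          have hj' : j' ≤ t := Nat.lt_succ_iff.1 (Nat.lt_of_succ_le hk)
          have hj'eq := (IH1 j' hj').1
          have hj'pos := (IH1 j' hj').2
          have hminpos : (0:EReal) ≤ min (μ' j') m := le_min hj'pos hm0
          by_cases hs : j' + 1 ≤ t
          · have he := (IH1 (j'+1) hs).1
            simp only [insertSeq, he, hj'eq]
            exact ⟨trivial, le_trans (IH1 (j'+1) hs).2 (le_max_left _ _)⟩
          · have hgt : t < j' + 1 := not_le.1 hs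
            have h1 := (IH2 (j'+1) hgt).1
            have h2 := (IH2 (j'+1) hgt).2
            simp only [insertSeq]
            rw [hj'eq, h2]
            constructor
            · rw [max_eq_right (le_trans (le_trans h1 hneg) hminpos),
                max_eq_right (bot_le)]
            · exact le_trans hminpos (le_max_right _ _)
      · intro k hk
        match k with
        | (j'+1) =>
          have hj'gt : t < j' := Nat.lt_of_succ_lt_succ hk
          have hj'1gt : t < j' + 1 := Nat.lt_succ_of_lt hj'gt
          constructor
          · simp only [insertSeq]
            exact max_le (IH2 (j'+1) hj'1gt).1
              (le_trans (min_le_left _ _) (IH2 j' hj'gt).1)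
          · simp only [insertSeq]
            rw [(IH2 (j'+1) hj'1gt).2, (IH2 j' hj'gt).2]
            simp
  obtain ⟨IH1, IH2⟩ := main (n-1) le_rfl
  obtain ⟨j, hjlt, hwj⟩ := hbar n hn le_rfl
  have hjle : j ≤ n - 1 := Nat.le_pred_of_lt hjlt
  exact mgs_eq_aux ℓ hℓ0 hℓ1 (n-1) _ _ (w n) (hw n)
    (fun k hk => (IH1 k hk).1) (fun k hk => (IH1 k hk).2)
    (fun k hk => (IH2 k hk).1) (fun k hk => (IH2 k hk).2)
    ⟨j, hjle, hwj⟩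
end
end

section
/- Fix ℓ ∈ [0,1), a positive integer n, and elements (w(t), 0 ≤ t ≤ n) of 𝒲 such that w₁(0) ≥ ℓ and max{w₁(t), …, w_t(t)} ≥ 1 − ℓ for every 1 ≤ t ≤ n. Let ν, ν̃ be any two elements of 𝒩₀ and define ν(−1) = ν, ν̃(−1) = ν̃, and ν(t) = Ψ_{w(t)} ν(t−1), ν̃(t) = Ψ_{w(t)} ν̃(t−1) for 0 ≤ t ≤ n. Then 𝔪(σν(t−1), w(t)) = 𝔪(σν̃(t−1), w(t)) for all 1 ≤ t ≤ n. -/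
open MeasureTheory ProbabilityTheory Filter

noncomputable section

namespace MGSAux

lemma insert_antitone {m : EReal} {a : ℕ → EReal} (ha : Antitone a) :
    Antitone (insertSeq m a) := by
  apply antitone_nat_of_succ_le
  intro k
  cases k with
  | zero =>
    show max (a 1) (min (a 0) m) ≤ max (a 0) m
    exact max_le ((ha (Nat.zero_le 1)).trans (le_max_left _ _)) min_le_max
  | succ k =>
    show max (a (k+2)) (min (a (k+1)) m) ≤ max (a (k+1)) (min (a k) m)
    exact max_le ((ha (by omega : k+1 ≤ k+2)).trans (le_max_left _ _))
      ((min_le_min (ha (Nat.le_succ k)) le_rfl).trans (le_max_right _ _))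

lemma add_sub_add_cancel (r : ℝ) (x y : EReal) :
    ((r : EReal) + x) - ((r : EReal) + y) = x - y := by
  rw [sub_eq_add_neg, EReal.neg_add (Or.inl (EReal.coe_ne_bot r)) (Or.inl (EReal.coe_ne_top r)),
    sub_eq_add_neg (-(r:EReal)) y, add_add_add_comm, ← EReal.coe_neg, ← EReal.coe_add,
    add_neg_cancel, EReal.coe_zero, zero_add, ← sub_eq_add_neg]

lemma sub_self_of {x : EReal} (h1 : x ≠ ⊤) (h2 : x ≠ ⊥) : x - x = 0 := by
  obtain ⟨r, hr⟩ : ∃ r : ℝ, (r : EReal) = x := ⟨x.toReal, EReal.coe_toReal h1 h2⟩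
  rw [← hr, ← EReal.coe_sub, sub_self, EReal.coe_zero]

def topBlock (t : ℕ) (σ : ℕ → EReal) (D : EReal) : ℕ → EReal := fun k =>
  if k = 0 then max 0 D else if k < t then max (σ k) (min (σ (k-1)) D) else min (σ (t-1)) D

lemma topBlock_congr {t : ℕ} (ht : 1 ≤ t) {σ σ' : ℕ → EReal} {D D' : EReal}
    (hσ : ∀ j, j < t → σ j = σ' j) (hD : D = D') (k : ℕ) :
    topBlock t σ D k = topBlock t σ' D' k := by
  subst hD
  unfold topBlock
  split_ifs with h1 h2
  · rfl
  · rw [hσ k h2, hσ (k-1) (by omega)]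
  · rw [hσ (t-1) (by omega)]

lemma key (ℓ : ℝ) (hℓ0 : 0 ≤ ℓ) (hℓ1 : ℓ ≤ 1) (t : ℕ) (ht : 1 ≤ t)
    (wt : ℕ → EReal) (hwt : ∀ k, wt k ≤ 1)
    (j₀ : ℕ) (hj₀ : j₀ < t) (hwj : ((1 - ℓ : ℝ) : EReal) ≤ wt j₀)
    (ν : ℕ → EReal) (hνa : Antitone ν) (hν00 : ν 0 = 0)
    (a : ℕ → EReal)
    (h1 : ∀ j, j < t → (ℓ : EReal) ≤ a j)
    (h2 : ∀ k, a (k + t) = ν k)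
    (h3 : Antitone a)
    (h4 : a 0 ≤ ((t : ℕ) : EReal)) :
    mgsM (shiftSeq a) wt = (⨆ j : Fin t, (shiftSeq a j + wt j)) ∧
    (∀ k, k ≤ t →
      Psi wt a k = a 0 + topBlock t (shiftSeq a) (⨆ j : Fin t, (shiftSeq a j + wt j)) k) ∧
    (∀ j, j < t + 1 → (ℓ : EReal) ≤ Psi wt a j) ∧
    (∀ k, Psi wt a (k + (t + 1)) = ν k) ∧
    Antitone (Psi wt a) ∧
    Psi wt a 0 ≤ (((t + 1 : ℕ)) : EReal) := by
  haveI : Nonempty (Fin t) := ⟨⟨0, ht⟩⟩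
  set D := ⨆ j : Fin t, (shiftSeq a j + wt j) with hD
  have ha0top : a 0 ≠ ⊤ := fun h => EReal.natCast_ne_top t (top_le_iff.1 (h ▸ h4))
  have hℓa0 : (ℓ : EReal) ≤ a 0 := h1 0 ht
  have ha0bot : a 0 ≠ ⊥ := ((EReal.bot_lt_coe ℓ).trans_le hℓa0).ne'
  obtain ⟨r, hr⟩ : ∃ r : ℝ, (r : EReal) = a 0 := ⟨(a 0).toReal, EReal.coe_toReal ha0top ha0bot⟩
  have hσ0 : ∀ k, a k = a 0 + shiftSeq a k := by
    intro k
    rw [shiftSeq, ← hr, add_comm, EReal.sub_add_cancel]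
  have hterm : (1 : EReal) ≤ a j₀ + wt j₀ := by
    calc (1 : EReal) = ((ℓ + (1 - ℓ) : ℝ) : EReal) := by norm_num
    _ = ((ℓ : ℝ) : EReal) + ((1 - ℓ : ℝ) : EReal) := by rw [EReal.coe_add]
    _ ≤ a j₀ + wt j₀ := add_le_add (h1 j₀ hj₀) hwj
  have hale0 : ∀ k, t ≤ k → a k ≤ 0 := by
    intro k hk
    obtain ⟨i, rfl⟩ : ∃ i, k = i + t := ⟨k - t, by omega⟩
    rw [h2 i, ← hν00]
    exact hνa (Nat.zero_le i)
  have htail : ∀ k, t ≤ k → a k + wt k ≤ 1 := by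
    intro k hk
    calc a k + wt k ≤ 0 + 1 := add_le_add (hale0 k hk) (hwt k)
    _ = 1 := zero_add 1
  have hDk : ∀ k, (hk : k < t) → shiftSeq a k + wt k ≤ D :=
    fun k hk => le_iSup (fun j : Fin t => shiftSeq a j + wt j) ⟨k, hk⟩
  -- m = a 0 + D
  have hm0 : mgsM a wt = a 0 + D := by
    apply le_antisymm
    · apply iSup_le
      intro k
      by_cases hk : k < t
      · rw [hσ0 k, add_assoc]
        exact add_le_add_right (hDk k hk) _
      · calc a k + wt k ≤ 1 := htail k (by omega)
        _ ≤ a j₀ + wt j₀ := hterm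
        _ = a 0 + (shiftSeq a j₀ + wt j₀) := by rw [hσ0 j₀, add_assoc]
        _ ≤ a 0 + D := add_le_add_right (hDk j₀ hj₀) _
    · obtain ⟨j, hj⟩ := exists_eq_ciSup_of_finite (f := fun j : Fin t => shiftSeq a j + wt j)
      calc a 0 + D = a 0 + (shiftSeq a (j : ℕ) + wt (j : ℕ)) := by rw [hD, ← hj]
      _ = a (j : ℕ) + wt (j : ℕ) := by rw [← add_assoc, ← hσ0]
      _ ≤ mgsM a wt := le_iSup (fun k => a k + wt k) (j : ℕ)
  have hDlow : ((1 - r : ℝ) : EReal) ≤ D := by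
    refine le_trans ?_ (hDk j₀ hj₀)
    calc ((1 - r : ℝ) : EReal) = ((ℓ - r : ℝ) : EReal) + ((1 - ℓ : ℝ) : EReal) := by
          rw [← EReal.coe_add]; norm_num
    _ ≤ shiftSeq a j₀ + wt j₀ := by
          refine add_le_add ?_ hwj
          rw [EReal.coe_sub, shiftSeq, ← hr]
          exact EReal.sub_le_sub (h1 j₀ hj₀) le_rfl
  have hms : mgsM (shiftSeq a) wt = D := by
    apply le_antisymm
    · apply iSup_le
      intro k
      by_cases hk : k < t
      · exact hDk k hk
      · refine le_trans ?_ hDlow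
        calc shiftSeq a k + wt k ≤ ((0 : EReal) - (r : EReal)) + 1 := by
              refine add_le_add ?_ (hwt k)
              rw [shiftSeq, ← hr]
              exact EReal.sub_le_sub (hale0 k (by omega)) le_rfl
        _ = ((1 - r : ℝ) : EReal) := by
              rw [sub_eq_add_neg, zero_add, add_comm (-(r:EReal)) 1, ← sub_eq_add_neg,
                ← EReal.coe_one, ← EReal.coe_sub]
        _ ≤ ((1 - r : ℝ) : EReal) := le_rfl
    · apply iSup_le
      intro j
      exact le_iSup (fun k => shiftSeq a k + wt k) (j : ℕ)
  have hm1 : (1 : EReal) ≤ mgsM a wt := hterm.trans (le_iSup (fun k => a k + wt k) j₀)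
  have hcoe1 : ((1 : ℝ) : EReal) = (1 : EReal) := rfl
  have hℓ1e : (ℓ : EReal) ≤ 1 := by
    rw [← hcoe1]; exact EReal.coe_le_coe_iff.2 hℓ1
  have hℓm : (ℓ : EReal) ≤ mgsM a wt := hℓ1e.trans hm1
  have hmono : Monotone (fun x : EReal => a 0 + x) := fun x y h => add_le_add_right h _
  have hD1 : D ≤ 1 := by
    apply iSup_le
    intro j
    calc shiftSeq a (j : ℕ) + wt (j : ℕ) ≤ 0 + 1 := by
          refine add_le_add ?_ (hwt _)
          rw [shiftSeq, ← hr]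
          have : a 0 - (r : EReal) = 0 := by
            rw [← hr, ← EReal.coe_sub]; norm_num
          rw [← this]
          exact EReal.sub_le_sub (h3 (Nat.zero_le _)) le_rfl
    _ = 1 := zero_add 1
  refine ⟨hms, ?_, ?_, ?_, insert_antitone h3, ?_⟩
  · -- top block formula
    intro k hk
    match k, hk with
    | 0, _ =>
      show max (a 0) (mgsM a wt) = a 0 + topBlock t (shiftSeq a) D 0
      have : topBlock t (shiftSeq a) D 0 = max 0 D := by simp [topBlock]
      rw [this, hmono.map_max, add_zero, ← hm0]
    | (k+1), hk =>
      show max (a (k+1)) (min (a k) (mgsM a wt)) = a 0 + topBlock t (shiftSeq a) D (k+1)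
      by_cases hlt : k + 1 < t
      · have htb : topBlock t (shiftSeq a) D (k+1)
            = max (shiftSeq a (k+1)) (min (shiftSeq a k) D) := by
          simp [topBlock, hlt]
        rw [htb, hmono.map_max, hmono.map_min, ← hσ0 (k+1), ← hσ0 k, ← hm0]
      · have hkt : k + 1 = t := by omega
        have hat : a (k+1) = 0 := by
          rw [hkt, ← hν00, ← h2 0]
          norm_num
        have htb : topBlock t (shiftSeq a) D (k+1) = min (shiftSeq a (t-1)) D := by
          simp only [topBlock]
          rw [if_neg (by omega), if_neg (by omega)]
        have hk' : k = t - 1 := by omega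
        have hmin : (0 : EReal) ≤ min (a k) (mgsM a wt) := by
          refine le_min ?_ ((zero_le_one).trans hm1)
          exact le_trans (EReal.coe_nonneg.2 hℓ0) (h1 k (by omega))
        rw [hat, max_eq_right hmin, htb, hmono.map_min, ← hσ0 (t-1), ← hm0, hk']
  · -- lower bound ℓ on new top block
    intro j hj
    match j with
    | 0 =>
      show (ℓ : EReal) ≤ max (a 0) (mgsM a wt)
      exact hℓa0.trans (le_max_left _ _)
    | (j+1) =>
      show (ℓ : EReal) ≤ max (a (j+1)) (min (a j) (mgsM a wt))
      exact le_trans (le_min (h1 j (by omega)) hℓm) (le_max_right _ _)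
  · -- tail is still ν
    intro k
    have e : k + (t + 1) = (k + t) + 1 := by omega
    rw [e]
    show max (a (k + t + 1)) (min (a (k + t)) (mgsM a wt)) = ν k
    have e2 : k + t + 1 = (k + 1) + t := by omega
    rw [e2, h2 (k+1), h2 k]
    have hν0 : ν k ≤ mgsM a wt := by
      refine le_trans ?_ ((zero_le_one).trans hm1)
      rw [← hν00]; exact hνa (Nat.zero_le k)
    rw [min_eq_left hν0, max_eq_right (hνa (Nat.le_succ k))]
  · -- growth bound
    show max (a 0) (mgsM a wt) ≤ (((t + 1 : ℕ)) : EReal)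
    have hcast : (((t + 1 : ℕ)) : EReal) = ((t : ℕ) : EReal) + 1 := by push_cast; ring_nf
    rw [hcast]
    refine max_le (h4.trans (le_add_of_nonneg_right zero_le_one)) ?_
    rw [hm0]
    exact add_le_add h4 hD1

lemma base (ℓ : ℝ) (hℓ0 : 0 ≤ ℓ)
    (w0 : ℕ → EReal) (hw0 : ∀ k, w0 k ≤ 1) (hw00 : (ℓ : EReal) ≤ w0 0)
    (ν : ℕ → EReal) (hνa : Antitone ν) (hν00 : ν 0 = 0) :
    (∀ j, j < 1 → (ℓ : EReal) ≤ Psi w0 ν j) ∧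
    (∀ k, Psi w0 ν (k + 1) = ν k) ∧
    Antitone (Psi w0 ν) ∧
    Psi w0 ν 0 ≤ (((1 : ℕ)) : EReal) ∧
    Psi w0 ν 0 ≠ ⊤ ∧ Psi w0 ν 0 ≠ ⊥ := by
  have hmℓ : (ℓ : EReal) ≤ mgsM ν w0 := by
    refine le_trans ?_ (le_iSup (fun k => ν k + w0 k) 0)
    rw [hν00, zero_add]
    exact hw00
  have hm1 : mgsM ν w0 ≤ 1 := by
    apply iSup_le
    intro k
    calc ν k + w0 k ≤ 0 + 1 := by
          refine add_le_add ?_ (hw0 k)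
          rw [← hν00]; exact hνa (Nat.zero_le k)
    _ = 1 := zero_add 1
  have htop : Psi w0 ν 0 = mgsM ν w0 := by
    show max (ν 0) (mgsM ν w0) = mgsM ν w0
    rw [hν00]
    exact max_eq_right ((EReal.coe_nonneg.2 hℓ0).trans hmℓ)
  refine ⟨?_, ?_, insert_antitone hνa, ?_, ?_, ?_⟩
  · intro j hj
    interval_cases j
    rw [htop]; exact hmℓ
  · intro k
    show max (ν (k+1)) (min (ν k) (mgsM ν w0)) = ν k
    have hνk : ν k ≤ mgsM ν w0 := by
      refine le_trans ?_ hmℓ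
      refine le_trans ?_ (EReal.coe_nonneg.2 hℓ0)
      rw [← hν00]; exact hνa (Nat.zero_le k)
    rw [min_eq_left hνk, max_eq_right (hνa (Nat.le_succ k))]
  · rw [htop, Nat.cast_one]; exact hm1
  · rw [htop]
    intro h
    rw [h] at hm1
    exact absurd hm1 (not_le.2 (by rw [← EReal.coe_one]; exact EReal.coe_lt_top 1))
  · rw [htop]
    exact ((EReal.bot_lt_coe ℓ).trans_le hmℓ).ne'

end MGSAux

/-- if `w₁(0) ≥ ℓ` and `max{w₁(t), …, w_t(t)} ≥ 1 - ℓ` for `1 ≤ t ≤ n`, then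
for any two starting states `ν, ν' ∈ 𝒩₀` (at time `-1`), the dynamics `ν(t) = Ψ_{w(t)} ν(t-1)`
satisfy `𝔪(σν(t-1), w(t)) = 𝔪(σν'(t-1), w(t))` for all `1 ≤ t ≤ n`.
(`νt s` encodes `ν(s-1)`, so `νt 0 = ν(-1) = ν` and `νt (s+1) = Ψ_{w(s)} νt s`.) -/
theorem mgs_decoupling_shifted
    (ℓ : ℝ) (hℓ0 : 0 ≤ ℓ) (hℓ1 : ℓ < 1) (n : ℕ) (hn : 0 < n)
    (w : ℕ → ℕ → EReal) (hw : ∀ t k, w t k ≤ 1)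
    (hw0 : (ℓ : EReal) ≤ w 0 0)
    (hbar : ∀ t, 1 ≤ t → t ≤ n → ∃ j < t, ((1 - ℓ : ℝ) : EReal) ≤ w t j)
    (ν ν' : ℕ → EReal) (hν : MemN0 ν) (hν' : MemN0 ν')
    (νt ν't : ℕ → ℕ → EReal)
    (hν0 : νt 0 = ν) (hν'0 : ν't 0 = ν')
    (hrec : ∀ t, t ≤ n → νt (t + 1) = Psi (w t) (νt t))
    (hrec' : ∀ t, t ≤ n → ν't (t + 1) = Psi (w t) (ν't t)) :
    ∀ t, 1 ≤ t → t ≤ n →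
      mgsM (shiftSeq (νt t)) (w t) = mgsM (shiftSeq (ν't t)) (w t) := by
  obtain ⟨hνa, hν00, -⟩ := hν
  obtain ⟨hν'a, hν'00, -⟩ := hν'
  have hℓ1' : ℓ ≤ 1 := hℓ1.le
  have hQ : ∀ t, 1 ≤ t → t ≤ n →
      ((∀ j, j < t → (ℓ : EReal) ≤ νt t j) ∧ (∀ k, νt t (k + t) = ν k) ∧ Antitone (νt t) ∧
        νt t 0 ≤ ((t : ℕ) : EReal)) ∧
      ((∀ j, j < t → (ℓ : EReal) ≤ ν't t j) ∧ (∀ k, ν't t (k + t) = ν' k) ∧ Antitone (ν't t) ∧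
        ν't t 0 ≤ ((t : ℕ) : EReal)) ∧
      (∀ k, k < t → shiftSeq (νt t) k = shiftSeq (ν't t) k) := by
    intro t ht1
    induction t, ht1 using Nat.le_induction with
    | base =>
      intro _
      have hr1 : νt 1 = Psi (w 0) ν := by rw [← hν0]; exact hrec 0 (by omega)
      have hr1' : ν't 1 = Psi (w 0) ν' := by rw [← hν'0]; exact hrec' 0 (by omega)
      obtain ⟨b1, b2, b3, b4, b5, b6⟩ := MGSAux.base ℓ hℓ0 (w 0) (hw 0) hw0 ν hνa hν00
      obtain ⟨c1, c2, c3, c4, c5, c6⟩ := MGSAux.base ℓ hℓ0 (w 0) (hw 0) hw0 ν' hν'a hν'00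
      rw [hr1, hr1']
      refine ⟨⟨b1, b2, b3, b4⟩, ⟨c1, c2, c3, c4⟩, ?_⟩
      intro k hk
      interval_cases k
      show Psi (w 0) ν 0 - Psi (w 0) ν 0 = Psi (w 0) ν' 0 - Psi (w 0) ν' 0
      rw [MGSAux.sub_self_of b5 b6, MGSAux.sub_self_of c5 c6]
    | succ t ht1 ih =>
      intro htn1
      have htn : t ≤ n := by omega
      obtain ⟨⟨i1, i2, i3, i4⟩, ⟨i1', i2', i3', i4'⟩, hJ⟩ := ih htn
      obtain ⟨j₀, hj₀, hwj⟩ := hbar t ht1 htn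
      have K := MGSAux.key ℓ hℓ0 hℓ1' t ht1 (w t) (hw t) j₀ hj₀ hwj ν hνa hν00
        (νt t) i1 i2 i3 i4
      have K' := MGSAux.key ℓ hℓ0 hℓ1' t ht1 (w t) (hw t) j₀ hj₀ hwj ν' hν'a hν'00
        (ν't t) i1' i2' i3' i4'
      have hrw : νt (t + 1) = Psi (w t) (νt t) := hrec t htn
      have hrw' : ν't (t + 1) = Psi (w t) (ν't t) := hrec' t htn
      rw [hrw, hrw']
      refine ⟨⟨K.2.2.1, K.2.2.2.1, K.2.2.2.2.1, K.2.2.2.2.2⟩,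
        ⟨K'.2.2.1, K'.2.2.2.1, K'.2.2.2.2.1, K'.2.2.2.2.2⟩, ?_⟩
      -- the shifted top block coincides
      have hDeq : (⨆ j : Fin t, (shiftSeq (νt t) j + w t j))
          = ⨆ j : Fin t, (shiftSeq (ν't t) j + w t j) :=
        iSup_congr fun j => by rw [hJ j j.2]
      have ha0top : νt t 0 ≠ ⊤ := fun h => EReal.natCast_ne_top t (top_le_iff.1 (h ▸ i4))
      have ha0bot : νt t 0 ≠ ⊥ := ((EReal.bot_lt_coe ℓ).trans_le (i1 0 ht1)).ne'
      obtain ⟨r, hr⟩ : ∃ r : ℝ, (r : EReal) = νt t 0 :=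
        ⟨(νt t 0).toReal, EReal.coe_toReal ha0top ha0bot⟩
      have ha0top' : ν't t 0 ≠ ⊤ := fun h => EReal.natCast_ne_top t (top_le_iff.1 (h ▸ i4'))
      have ha0bot' : ν't t 0 ≠ ⊥ := ((EReal.bot_lt_coe ℓ).trans_le (i1' 0 ht1)).ne'
      obtain ⟨r', hr'⟩ : ∃ r' : ℝ, (r' : EReal) = ν't t 0 :=
        ⟨(ν't t 0).toReal, EReal.coe_toReal ha0top' ha0bot'⟩
      intro k hk
      have hk' : k ≤ t := by omega
      have hTB : ∀ j, j ≤ t →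
          MGSAux.topBlock t (shiftSeq (νt t)) (⨆ j : Fin t, (shiftSeq (νt t) j + w t j)) j
          = MGSAux.topBlock t (shiftSeq (ν't t)) (⨆ j : Fin t, (shiftSeq (ν't t) j + w t j)) j :=
        fun j _ => MGSAux.topBlock_congr ht1 (fun i hi => hJ i hi) hDeq j
      show Psi (w t) (νt t) k - Psi (w t) (νt t) 0
          = Psi (w t) (ν't t) k - Psi (w t) (ν't t) 0
      rw [K.2.1 k hk', K.2.1 0 (by omega), K'.2.1 k hk', K'.2.1 0 (by omega),
        ← hr, ← hr', MGSAux.add_sub_add_cancel, MGSAux.add_sub_add_cancel,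
        hTB k hk', hTB 0 (by omega)]
  intro t ht1 htn
  obtain ⟨⟨i1, i2, i3, i4⟩, ⟨i1', i2', i3', i4'⟩, hJ⟩ := hQ t ht1 htn
  obtain ⟨j₀, hj₀, hwj⟩ := hbar t ht1 htn
  have K := (MGSAux.key ℓ hℓ0 hℓ1' t ht1 (w t) (hw t) j₀ hj₀ hwj ν hνa hν00
    (νt t) i1 i2 i3 i4).1
  have K' := (MGSAux.key ℓ hℓ0 hℓ1' t ht1 (w t) (hw t) j₀ hj₀ hwj ν' hν'a hν'00
    (ν't t) i1' i2' i3' i4').1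
  rw [K, K']
  exact iSup_congr fun j => by rw [hJ j j.2]
end
end

section
/- Let F be a probability distribution on ℝ ∪ {−∞} with essential supremum 1 (i.e., F([1−ε,1]) > 0 for all ε > 0 and F((1,∞)) = 0). Fix ℓ ∈ [0,1) with p := F([1−ℓ,1]) ∈ (0,1]. Let (w_j(t), j ≥ 1, t ∈ ℤ) be i.i.d. random variables with law F, and for k ∈ ℤ define the event R_k := {w₁(k) ≥ ℓ} ∩ ⋂_{j ≥ 1} {max{w₁(k+j), …, w_j(k+j)} ≥ 1 − ℓ}. Then almost surely the random set J := {k ∈ ℤ : R_k holds} is unbounded above and unbounded below (i.e., inf J = −∞ and sup J = +∞ a.s.). -/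
open MeasureTheory ProbabilityTheory Filter

noncomputable section

lemma aux_one_sub_sum_le_prod (f : ℕ → ENNReal) (s : Finset ℕ) :
    1 - ∑ j ∈ s, f j ≤ ∏ j ∈ s, (1 - f j) := by
  classical
  induction s using Finset.cons_induction with
  | empty => simp
  | cons a s ha ih =>
    rw [Finset.sum_cons, Finset.prod_cons]
    have h1 : (1:ENNReal) - (f a + ∑ j ∈ s, f j) = (1 - f a) - ∑ j ∈ s, f j := by
      rw [tsub_tsub]
    rw [h1]
    have h2 : (1 - f a) - ∑ j ∈ s, f j ≤ (1 - f a) - (1 - f a) * ∑ j ∈ s, f j := by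
      apply tsub_le_tsub_left
      calc (1 - f a) * ∑ j ∈ s, f j ≤ 1 * ∑ j ∈ s, f j := by
            exact mul_le_mul_left tsub_le_self _
        _ = ∑ j ∈ s, f j := one_mul _
    refine h2.trans ?_
    have h3 : (1 - f a) - (1 - f a) * ∑ j ∈ s, f j = (1 - f a) * (1 - ∑ j ∈ s, f j) := by
      rw [ENNReal.mul_sub (fun _ _ => ?_), mul_one]
      exact (tsub_le_self.trans_lt ENNReal.one_lt_top).ne
    rw [h3]
    exact mul_le_mul_right ih _

lemma aux_iIndepFun_reindex {Ω : Type} [MeasurableSpace Ω] {μ : Measure Ω}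
    {ι κ β : Type*} [MeasurableSpace β] {X : ι → Ω → β}
    (h : iIndepFun X μ)
    (g : κ → ι) (hg : Function.Injective g) :
    iIndepFun (fun k => X (g k)) μ := by
  classical
  rw [iIndepFun_iff] at h ⊢
  intro s f' H
  set F : ι → Set Ω := fun p => ⋂ k' ∈ s.filter (fun k' => g k' = p), f' k' with hF
  have hfil : ∀ k ∈ s, s.filter (fun k' => g k' = g k) = {k} := by
    intro k hk
    ext k'
    simp only [Finset.mem_filter, Finset.mem_singleton]
    constructor
    · rintro ⟨_, h'⟩; exact hg h'
    · rintro rfl; exact ⟨hk, rfl⟩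
  have hkey : ∀ k ∈ s, F (g k) = f' k := by
    intro k hk
    rw [hF]
    simp only [hfil k hk]
    simp
  have H2 : ∀ p ∈ s.image g,
      MeasurableSet[MeasurableSpace.comap (X p) inferInstance] (F p) := by
    intro p hp
    obtain ⟨k, hk, rfl⟩ := Finset.mem_image.mp hp
    rw [hkey k hk]
    exact H k hk
  have hres := h (s.image g) H2
  rw [Finset.set_biInter_finset_image, Finset.prod_image (fun k hk k' hk' hh => hg hh)] at hres
  calc μ (⋂ k ∈ s, f' k) = μ (⋂ k ∈ s, F (g k)) := by
        congr 1
        exact (Set.iInter₂_congr hkey).symm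
    _ = ∏ k ∈ s, μ (F (g k)) := hres
    _ = ∏ k ∈ s, μ (f' k) := Finset.prod_congr rfl fun k hk => by rw [hkey k hk]


/-- The joint law of a finite subfamily of an i.i.d. family is determined by the marginal. -/
lemma aux_map_restrict_eq {Ω : Type} [MeasurableSpace Ω] {μ : Measure Ω} [IsProbabilityMeasure μ]
    {ι β : Type*} [MeasurableSpace β] {F : Measure β}
    {X Y : ι → Ω → β}
    (hXm : ∀ p, Measurable (X p)) (hYm : ∀ p, Measurable (Y p))
    (hX : iIndepFun X μ)
    (hY : iIndepFun Y μ)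
    (hlawX : ∀ p, μ.map (X p) = F) (hlawY : ∀ p, μ.map (Y p) = F)
    (s : Finset ι) :
    μ.map (fun ω (i : s) => X i ω) = μ.map (fun ω (i : s) => Y i ω) := by
  classical
  have hXm' : Measurable (fun ω (i : s) => X i ω) :=
    measurable_pi_lambda _ (fun i => hXm i)
  have hYm' : Measurable (fun ω (i : s) => Y i ω) :=
    measurable_pi_lambda _ (fun i => hYm i)
  have hXP : IsProbabilityMeasure (μ.map (fun ω (i : s) => X i ω)) :=
    Measure.isProbabilityMeasure_map hXm'.aemeasurable
  have key : ∀ (Z : ι → Ω → β), (∀ p, Measurable (Z p)) →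
      iIndepFun Z μ →
      (∀ p, μ.map (Z p) = F) →
      ∀ B : (i : s) → Set β, (∀ i, MeasurableSet (B i)) →
      (μ.map (fun ω (i : s) => Z i ω)) (Set.pi Set.univ B) = ∏ i : s, F (B i) := by
    intro Z hZm hZ hlawZ B hB
    have hZm' : Measurable (fun ω (i : s) => Z i ω) :=
      measurable_pi_lambda _ (fun i => hZm i)
    rw [Measure.map_apply hZm' (MeasurableSet.univ_pi hB)]
    have hpre : (fun ω (i : s) => Z i ω) ⁻¹' (Set.pi Set.univ B)
        = ⋂ i ∈ (Finset.univ : Finset s), (fun ω => Z i ω) ⁻¹' (B i) := by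
      ext ω
      simp [Set.mem_pi]
    rw [hpre]
    have hZs : iIndepFun
        (fun i : s => Z i) μ :=
      aux_iIndepFun_reindex hZ (fun i : s => (i : ι)) Subtype.val_injective
    rw [iIndepFun.meas_biInter hZs (fun i _ => ⟨B i, hB i, rfl⟩)]
    refine Finset.prod_congr rfl fun i _ => ?_
    rw [← hlawZ i, Measure.map_apply (hZm i) (hB i)]
  refine ext_of_generate_finite _ generateFrom_pi.symm
    isPiSystem_pi (fun t ht => ?_) ?_
  · obtain ⟨B, hB, rfl⟩ := ht
    simp only [Set.mem_pi, Set.mem_univ, forall_true_left, Set.mem_setOf_eq] at hB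
    rw [key X hXm hX hlawX B (fun i => hB i),
        key Y hYm hY hlawY B (fun i => hB i)]
  · have hYP : IsProbabilityMeasure (μ.map (fun ω (i : s) => Y i ω)) :=
      Measure.isProbabilityMeasure_map hYm'.aemeasurable
    simp [measure_univ]

/-- The law of an i.i.d. family indexed by a countable type is invariant under
injective reindexing. -/
lemma aux_map_family_eq {Ω : Type} [MeasurableSpace Ω] {μ : Measure Ω} [IsProbabilityMeasure μ]
    {ι β : Type*} [Countable ι] [MeasurableSpace β] {F : Measure β}
    {X : ι → Ω → β}
    (hXm : ∀ p, Measurable (X p))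
    (hX : iIndepFun X μ)
    (hlawX : ∀ p, μ.map (X p) = F)
    (g : ι → ι) (hg : Function.Injective g) :
    μ.map (fun ω p => X (g p) ω) = μ.map (fun ω p => X p ω) := by
  classical
  have hXm' : Measurable (fun ω (p : ι) => X p ω) :=
    measurable_pi_lambda _ (fun p => hXm p)
  have hXgm' : Measurable (fun ω (p : ι) => X (g p) ω) :=
    measurable_pi_lambda _ (fun p => hXm (g p))
  have hP : IsProbabilityMeasure (μ.map (fun ω (p : ι) => X (g p) ω)) :=
    Measure.isProbabilityMeasure_map hXgm'.aemeasurable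
  refine ext_of_generate_finite _ MeasureTheory.generateFrom_measurableCylinders.symm
    MeasureTheory.isPiSystem_measurableCylinders (fun t ht => ?_) ?_
  · obtain ⟨s, T, hT, rfl⟩ := (MeasureTheory.mem_measurableCylinders t).mp ht
    rw [Measure.map_apply hXgm' (hT.cylinder s),
        Measure.map_apply hXm' (hT.cylinder s)]
    have h1 : (fun ω (p : ι) => X (g p) ω) ⁻¹' MeasureTheory.cylinder s T
        = (fun ω (i : s) => X (g i) ω) ⁻¹' T := by
      ext ω; simp [MeasureTheory.mem_cylinder, Finset.restrict_def]
    have h2 : (fun ω (p : ι) => X p ω) ⁻¹' MeasureTheory.cylinder s T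
        = (fun ω (i : s) => X i ω) ⁻¹' T := by
      ext ω; simp [MeasureTheory.mem_cylinder, Finset.restrict_def]
    rw [h1, h2]
    have hmarg := aux_map_restrict_eq (F := F) (fun p => hXm (g p)) hXm
      (aux_iIndepFun_reindex hX g hg) hX (fun p => hlawX (g p)) hlawX s
    have hXgms : Measurable (fun ω (i : s) => X (g i) ω) :=
      measurable_pi_lambda _ (fun i => hXm (g i))
    have hXms : Measurable (fun ω (i : s) => X i ω) :=
      measurable_pi_lambda _ (fun i => hXm i)
    rw [← Measure.map_apply hXgms hT, ← Measure.map_apply hXms hT, hmarg]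
  · have hP2 : IsProbabilityMeasure (μ.map (fun ω (p : ι) => X p ω)) :=
      Measure.isProbabilityMeasure_map hXm'.aemeasurable
    simp [measure_univ]


/-- with charges `w_{j+1}(t) = X(t,j)` (for `t ∈ ℤ`) i.i.d. of law `F` with
essential supremum `1`, the random set `J = {k ∈ ℤ : R_k}` of times at which the event
`R_k = {w₁(k) ≥ ℓ} ∩ ⋂_{j≥1} {max{w₁(k+j),…,w_j(k+j)} ≥ 1-ℓ}` holds is a.s. unbounded
above and below. -/
theorem regeneration_times_unbounded
    {Ω : Type} [MeasurableSpace Ω] (μ : Measure Ω) [IsProbabilityMeasure μ]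
    (F : Measure EReal) [IsProbabilityMeasure F]
    (hF1 : ∀ ε : ℝ, 0 < ε → 0 < F (Set.Icc ((1 - ε : ℝ) : EReal) 1))
    (hF2 : F {x : EReal | 1 < x} = 0)
    (ℓ : ℝ) (hℓ0 : 0 ≤ ℓ) (hℓ1 : ℓ < 1)
    (hp : 0 < F (Set.Icc ((1 - ℓ : ℝ) : EReal) 1))
    (X : ℤ × ℕ → Ω → EReal)
    (hmeas : ∀ p, Measurable (X p))
    (hindep : iIndepFun X μ)
    (hlaw : ∀ p, μ.map (X p) = F)
    (Good : ℤ → Ω → Prop)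
    (hGood : ∀ k ω, Good k ω ↔
      ((ℓ : EReal) ≤ X (k, 0) ω ∧
        ∀ j : ℕ, 1 ≤ j → ∃ i < j, ((1 - ℓ : ℝ) : EReal) ≤ X (k + (j : ℤ), i) ω))
    :
    ∀ᵐ ω ∂μ, (∀ N : ℤ, ∃ k : ℤ, N ≤ k ∧ Good k ω) ∧ (∀ N : ℤ, ∃ k : ℤ, k ≤ N ∧ Good k ω) := by
  classical
  set c1 : EReal := ((1 - ℓ : ℝ) : EReal) with hc1
  set Φ : Ω → ((ℤ × ℕ) → EReal) := fun ω p => X p ω with hΦdef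
  have hΦ : Measurable Φ := measurable_pi_lambda _ hmeas
  set GF : ℤ → Set ((ℤ × ℕ) → EReal) := fun k =>
    {f | (ℓ : EReal) ≤ f (k, 0) ∧
      ∀ j : ℕ, 1 ≤ j → ∃ i < j, c1 ≤ f (k + (j : ℤ), i)} with hGFdef
  set A : ℤ → Set Ω := fun k => Φ ⁻¹' GF k with hAdef
  have hGoodA : ∀ k ω, Good k ω ↔ ω ∈ A k := fun k ω => hGood k ω
  -- structural form of GF
  have hGFeq : ∀ k, GF k
      = ((fun f : (ℤ × ℕ) → EReal => f (k, 0)) ⁻¹' Set.Ici (ℓ : EReal)) ∩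
        ⋂ m : ℕ, ⋃ i : ℕ, ⋃ (_ : i < m + 1),
          (fun f : (ℤ × ℕ) → EReal => f (k + ((m + 1 : ℕ) : ℤ), i)) ⁻¹' Set.Ici c1 := by
    intro k
    ext f
    simp only [hGFdef, Set.mem_setOf_eq, Set.mem_inter_iff, Set.mem_preimage, Set.mem_Ici,
      Set.mem_iInter, Set.mem_iUnion, exists_prop]
    constructor
    · rintro ⟨h1, h2⟩
      exact ⟨h1, fun m => h2 (m + 1) (by omega)⟩
    · rintro ⟨h1, h2⟩
      refine ⟨h1, fun j hj => ?_⟩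
      obtain ⟨m, rfl⟩ : ∃ m, j = m + 1 := ⟨j - 1, by omega⟩
      exact h2 m
  have hGFmeas : ∀ k, MeasurableSet (GF k) := by
    intro k
    rw [hGFeq k]
    refine MeasurableSet.inter ((measurable_pi_apply _) measurableSet_Ici) ?_
    exact MeasurableSet.iInter fun m => MeasurableSet.iUnion fun i =>
      MeasurableSet.iUnion fun _ => (measurable_pi_apply _) measurableSet_Ici
  set Eev : ℤ → Set Ω := fun k => X (k, 0) ⁻¹' Set.Ici (ℓ : EReal) with hEev
  set Uev : ℤ → ℕ → Set Ω := fun k m =>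
    ⋃ i : ℕ, ⋃ (_ : i < m + 1), X (k + ((m + 1 : ℕ) : ℤ), i) ⁻¹' Set.Ici c1 with hUev
  have hAeq : ∀ k, A k = Eev k ∩ ⋂ m : ℕ, Uev k m := by
    intro k
    rw [hAdef]
    simp only [hGFeq k, Set.preimage_inter, Set.preimage_iInter, Set.preimage_iUnion]
    rfl
  have hA_meas_le : ∀ (k : ℤ) (a : MeasurableSpace Ω),
      (∀ p : ℤ × ℕ, k ≤ p.1 → ∀ t : Set EReal, MeasurableSet t →
        MeasurableSet[a] (X p ⁻¹' t)) →
      MeasurableSet[a] (A k) := by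
    intro k a h
    rw [hAeq k]
    refine MeasurableSet.inter (h (k, 0) le_rfl _ measurableSet_Ici) ?_
    refine MeasurableSet.iInter fun m => MeasurableSet.iUnion fun i =>
      MeasurableSet.iUnion fun _ => ?_
    exact h (k + ((m + 1 : ℕ) : ℤ), i) (le_add_of_nonneg_right (Int.natCast_nonneg _))
      _ measurableSet_Ici
  have hAmeas : ∀ k, MeasurableSet (A k) :=
    fun k => hA_meas_le k _ (fun p _ t ht => hmeas p ht)
  -- ===== positivity =====
  obtain ⟨c, hc, hcA⟩ : ∃ c : ENNReal, 0 < c ∧ ∀ k : ℤ, c ≤ μ (A k) := by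
    -- constants
    set q0 : ENNReal := F (Set.Icc (ℓ : EReal) 1) with hq0def
    set r : ENNReal := F (Set.Iio c1) with hrdef
    set pp : ENNReal := F (Set.Ici c1) with hppdef
    have hq0 : 0 < q0 := by
      have h := hF1 (1 - ℓ) (by linarith)
      rw [show (1 - (1 - ℓ) : ℝ) = ℓ by ring] at h
      exact h
    have hpp_pos : 0 < pp :=
      lt_of_lt_of_le hp (measure_mono Set.Icc_subset_Ici_self)
    have hr_pp : r + pp = 1 := by
      rw [hrdef, hppdef, ← measure_union (Set.Iio_disjoint_Ici le_rfl) measurableSet_Ici,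
        Set.Iio_union_Ici, measure_univ]
    have hr_le_one : r ≤ 1 := by
      rw [← hr_pp]; exact le_add_of_nonneg_right zero_le
    have hr_lt_one : r < 1 := by
      rcases lt_or_ge r 1 with h | h
      · exact h
      · exfalso
        have h1 : (1 : ENNReal) + pp ≤ 1 + 0 := by
          rw [add_zero]
          calc (1 : ENNReal) + pp ≤ r + pp := add_le_add_left h _
            _ = 1 := hr_pp
        have := (ENNReal.add_le_add_iff_left ENNReal.one_ne_top).mp h1
        exact absurd (le_antisymm this zero_le) (ne_of_gt hpp_pos)
    have hpp_eq : pp = 1 - r := by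
      rw [← hr_pp, ENNReal.add_sub_cancel_left (measure_ne_top F _)]
    -- measure of single events
    have hE_meas : ∀ k, μ (Eev k) = F (Set.Ici (ℓ : EReal)) := by
      intro k
      rw [hEev, ← hlaw (k, 0), Measure.map_apply (hmeas _) measurableSet_Ici]
    have hE_ge : ∀ k, q0 ≤ μ (Eev k) := by
      intro k
      rw [hE_meas k]
      exact measure_mono Set.Icc_subset_Ici_self
    -- complement of column events
    have hUc : ∀ (k : ℤ) (m : ℕ), μ ((Uev k m)ᶜ) = r ^ (m + 1) := by
      intro k m
      have hcompl : (Uev k m)ᶜ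
          = ⋂ i ∈ Finset.range (m + 1), X (k + ((m + 1 : ℕ) : ℤ), i) ⁻¹' Set.Iio c1 := by
        ext ω
        simp [hUev, not_le]
      rw [hcompl]
      have hYind : iIndepFun
          (fun i : ℕ => X (k + ((m + 1 : ℕ) : ℤ), i)) μ :=
        aux_iIndepFun_reindex hindep (fun i : ℕ => (k + ((m + 1 : ℕ) : ℤ), i))
          (fun a b h => by simpa using congrArg Prod.snd h)
      rw [iIndepFun.meas_biInter hYind (fun i _ => ⟨Set.Iio c1, measurableSet_Iio, rfl⟩)]
      have : ∀ i, μ (X (k + ((m + 1 : ℕ) : ℤ), i) ⁻¹' Set.Iio c1) = r := by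
        intro i
        rw [hrdef, ← hlaw (k + ((m + 1 : ℕ) : ℤ), i),
          Measure.map_apply (hmeas _) measurableSet_Iio]
      simp only [this]
      rw [Finset.prod_const, Finset.card_range]
    have hUmeasSet : ∀ (k : ℤ) (m : ℕ), MeasurableSet (Uev k m) := by
      intro k m
      exact MeasurableSet.iUnion fun i => MeasurableSet.iUnion fun _ =>
        hmeas _ measurableSet_Ici
    have hU : ∀ (k : ℤ) (m : ℕ), μ (Uev k m) = 1 - r ^ (m + 1) := by
      intro k m
      have := prob_compl_eq_one_sub (μ := μ) (hUmeasSet k m).compl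
      rw [compl_compl, hUc] at this
      exact this
    -- product rule across columns
    have hpre : ∀ (S : Set (ℤ × ℕ)) (p : ℤ × ℕ), p ∈ S → ∀ t : Set EReal, MeasurableSet t →
        MeasurableSet[⨆ p' ∈ S, MeasurableSpace.comap (X p') inferInstance] (X p ⁻¹' t) := by
      intro S p hp t ht
      exact le_iSup₂ (f := fun (p' : ℤ × ℕ) (_ : p' ∈ S) =>
        MeasurableSpace.comap (X p') inferInstance) p hp _ ⟨t, ht, rfl⟩
    have hBprod : ∀ (k : ℤ) (J : ℕ),
        μ (Eev k ∩ ⋂ m ∈ Finset.range J, Uev k m)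
          = μ (Eev k) * ∏ m ∈ Finset.range J, μ (Uev k m) := by
      intro k J
      induction J with
      | zero => simp
      | succ J ih =>
        have hsplit : Eev k ∩ ⋂ m ∈ Finset.range (J + 1), Uev k m
            = (Eev k ∩ ⋂ m ∈ Finset.range J, Uev k m) ∩ Uev k J := by
          rw [Finset.range_add_one, Finset.set_biInter_insert, Set.inter_comm (Uev k J),
            ← Set.inter_assoc]
        set S : Set (ℤ × ℕ) := {p | p.1 ≤ k + (J : ℤ)} with hS
        set T : Set (ℤ × ℕ) := {p | p.1 = k + ((J + 1 : ℕ) : ℤ)} with hT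
        have hdisj : Disjoint S T := by
          rw [Set.disjoint_left]
          rintro ⟨t, i⟩ hpS hpT
          simp only [hS, hT, Set.mem_setOf_eq] at hpS hpT
          rw [hpT] at hpS
          push_cast at hpS
          omega
        have hInd := indep_iSup_of_disjoint
          (m := fun p : ℤ × ℕ => MeasurableSpace.comap (X p) inferInstance)
          (fun p => (hmeas p).comap_le) hindep.iIndep hdisj
        have hmB : MeasurableSet[⨆ p ∈ S, MeasurableSpace.comap (X p) inferInstance]
            (Eev k ∩ ⋂ m ∈ Finset.range J, Uev k m) := by
          refine MeasurableSet.inter ?_ ?_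
          · exact hpre S (k, 0) (by simp [hS]) _ measurableSet_Ici
          · refine MeasurableSet.biInter (Finset.range J).countable_toSet fun m hm => ?_
            refine MeasurableSet.iUnion fun i => MeasurableSet.iUnion fun _ => ?_
            refine hpre S (k + ((m + 1 : ℕ) : ℤ), i) ?_ _ measurableSet_Ici
            simp only [hS, Set.mem_setOf_eq]
            have : m < J := Finset.mem_range.mp hm
            push_cast
            omega
        have hmU : MeasurableSet[⨆ p ∈ T, MeasurableSpace.comap (X p) inferInstance]
            (Uev k J) := by
          refine MeasurableSet.iUnion fun i => MeasurableSet.iUnion fun _ => ?_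
          exact hpre T (k + ((J + 1 : ℕ) : ℤ), i) (by simp [hT]) _ measurableSet_Ici
        have hmul := (Indep_iff _ _ _).mp hInd _ _ hmB hmU
        rw [hsplit, hmul, ih, Finset.prod_range_succ, mul_assoc]
    -- geometric tail sums
    set tl : ℕ → ENNReal := fun n => ∑' j : ℕ, r ^ (j + n) with htl
    have htsum_ne : (∑' j : ℕ, r ^ j) ≠ ⊤ := by
      rw [ENNReal.tsum_geometric]
      exact ENNReal.inv_ne_top.mpr (tsub_pos_iff_lt.mpr hr_lt_one).ne'
    have htl0 : Tendsto tl atTop (nhds 0) := ENNReal.tendsto_sum_nat_add _ htsum_ne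
    have hpow_anti : ∀ {a b : ℕ}, a ≤ b → r ^ b ≤ r ^ a := by
      intro a b hab
      have h1 : r ^ b = r ^ a * r ^ (b - a) := by
        rw [← pow_add, show a + (b - a) = b from by omega]
      rw [h1]
      calc r ^ a * r ^ (b - a) ≤ r ^ a * 1 := mul_le_mul_right (pow_le_one' hr_le_one _) _
        _ = r ^ a := mul_one _
    have hfac_ge : ∀ m : ℕ, pp ≤ 1 - r ^ (m + 1) := by
      intro m
      rw [hpp_eq]
      have := tsub_le_tsub_left (hpow_anti (a := 1) (b := m + 1) (by omega)) 1
      simpa using this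
    obtain ⟨J0, hJ0⟩ := ENNReal.tendsto_atTop_zero.mp htl0 2⁻¹
      (by simp [pos_iff_ne_zero])
    have hprodnum : ∀ J : ℕ, J0 ≤ J →
        pp ^ J0 * 2⁻¹ ≤ ∏ m ∈ Finset.range J, (1 - r ^ (m + 1)) := by
      intro J hJ
      rw [← Finset.prod_range_mul_prod_Ico _ hJ]
      have piece1 : pp ^ J0 ≤ ∏ m ∈ Finset.range J0, (1 - r ^ (m + 1)) := by
        calc pp ^ J0 = ∏ _m ∈ Finset.range J0, pp := by
              rw [Finset.prod_const, Finset.card_range]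
          _ ≤ _ := Finset.prod_le_prod' fun m _ => hfac_ge m
      have hsum_le : ∑ m ∈ Finset.Ico J0 J, r ^ (m + 1) ≤ tl J0 := by
        have hinj : ∀ m ∈ Finset.Ico J0 J, ∀ m' ∈ Finset.Ico J0 J,
            m + 1 - J0 = m' + 1 - J0 → m = m' := by
          intro m hm m' hm' h
          simp only [Finset.mem_Ico] at hm hm'
          omega
        have heq : ∑ m ∈ Finset.Ico J0 J, r ^ (m + 1)
            = ∑ j ∈ (Finset.Ico J0 J).image (fun m => m + 1 - J0), r ^ (j + J0) := by
          rw [Finset.sum_image hinj]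
          refine Finset.sum_congr rfl fun m hm => ?_
          simp only [Finset.mem_Ico] at hm
          congr 1
          omega
        rw [heq, htl]
        exact ENNReal.sum_le_tsum _
      have piece2 : (2 : ENNReal)⁻¹ ≤ ∏ m ∈ Finset.Ico J0 J, (1 - r ^ (m + 1)) := by
        calc (2 : ENNReal)⁻¹ = 1 - 2⁻¹ := by
              rw [ENNReal.one_sub_inv_two]
          _ ≤ 1 - tl J0 := tsub_le_tsub_left (hJ0 J0 le_rfl) 1
          _ ≤ 1 - ∑ m ∈ Finset.Ico J0 J, r ^ (m + 1) := tsub_le_tsub_left hsum_le 1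
          _ ≤ _ := aux_one_sub_sum_le_prod _ _
      exact mul_le_mul' piece1 piece2
    set cB : ENNReal := q0 * (pp ^ J0 * 2⁻¹) with hcB
    have hcB_pos : 0 < cB := by
      rw [hcB]
      refine ENNReal.mul_pos (ne_of_gt hq0) ?_
      exact (ENNReal.mul_pos (ne_of_gt (ENNReal.pow_pos hpp_pos _)) (by simp)).ne'
    have hcB_ne_top : cB ≠ ⊤ := by
      rw [hcB]
      exact ENNReal.mul_ne_top (measure_ne_top F _)
        (ENNReal.mul_ne_top (ENNReal.pow_ne_top (measure_ne_top F _)) (by simp))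
    obtain ⟨J1, hJ1⟩ := ENNReal.tendsto_atTop_zero.mp htl0 (cB / 2)
      (ENNReal.div_pos hcB_pos.ne' ENNReal.ofNat_ne_top)
    set J : ℕ := max J0 J1 with hJdef
    refine ⟨cB / 2, ENNReal.div_pos hcB_pos.ne' ENNReal.ofNat_ne_top, fun k => ?_⟩
    rw [hAeq k]
    -- union bound over the tail
    have hD_le : μ (⋃ m : ℕ, (Uev k (J + m))ᶜ) ≤ tl J := by
      calc μ (⋃ m : ℕ, (Uev k (J + m))ᶜ) ≤ ∑' m : ℕ, μ ((Uev k (J + m))ᶜ) :=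
            measure_iUnion_le _
        _ = ∑' m : ℕ, r ^ (J + m + 1) := by
            refine tsum_congr fun m => ?_
            rw [hUc]
        _ ≤ ∑' m : ℕ, r ^ (m + J) := ENNReal.tsum_le_tsum fun m => hpow_anti (a := m + J) (b := J + m + 1) (by omega)
        _ = tl J := rfl
    have hsub : Eev k ∩ ⋂ m ∈ Finset.range J, Uev k m
        ⊆ (Eev k ∩ ⋂ m : ℕ, Uev k m) ∪ ⋃ m : ℕ, (Uev k (J + m))ᶜ := by
      rintro ω ⟨hE, hR⟩
      by_cases hD : ω ∈ ⋃ m : ℕ, (Uev k (J + m))ᶜ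
      · exact Or.inr hD
      · refine Or.inl ⟨hE, Set.mem_iInter.mpr fun m => ?_⟩
        rcases lt_or_ge m J with hm | hm
        · exact Set.mem_iInter₂.mp hR m (Finset.mem_range.mpr hm)
        · have h1 : ω ∈ Uev k (J + (m - J)) := by
            by_contra hcon
            exact hD (Set.mem_iUnion.mpr ⟨m - J, hcon⟩)
          rwa [show J + (m - J) = m by omega] at h1
    have hchain : cB ≤ μ (Eev k ∩ ⋂ m : ℕ, Uev k m) + cB / 2 := by
      calc cB = q0 * (pp ^ J0 * 2⁻¹) := hcB
        _ ≤ μ (Eev k) * ∏ m ∈ Finset.range J, (1 - r ^ (m + 1)) :=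
            mul_le_mul' (hE_ge k) (hprodnum J (le_max_left _ _))
        _ = μ (Eev k) * ∏ m ∈ Finset.range J, μ (Uev k m) := by
            congr 1
            exact Finset.prod_congr rfl fun m _ => (hU k m).symm
        _ = μ (Eev k ∩ ⋂ m ∈ Finset.range J, Uev k m) := (hBprod k J).symm
        _ ≤ μ ((Eev k ∩ ⋂ m : ℕ, Uev k m) ∪ ⋃ m : ℕ, (Uev k (J + m))ᶜ) :=
            measure_mono hsub
        _ ≤ μ (Eev k ∩ ⋂ m : ℕ, Uev k m) + μ (⋃ m : ℕ, (Uev k (J + m))ᶜ) :=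
            measure_union_le _ _
        _ ≤ μ (Eev k ∩ ⋂ m : ℕ, Uev k m) + cB / 2 :=
            add_le_add_right (hD_le.trans (hJ1 J (le_max_right _ _))) _
    calc cB / 2 = cB - cB / 2 := (ENNReal.sub_half hcB_ne_top).symm
      _ ≤ μ (Eev k ∩ ⋂ m : ℕ, Uev k m) := tsub_le_iff_right.mpr hchain
  
  -- ===== Kolmogorov 0-1 law : unbounded above =====
  set UU : ℤ → Set Ω := fun N => ⋃ k : ℤ, ⋃ (_ : N ≤ k), A k with hUU
  have hUUmono : ∀ {N M : ℤ}, N ≤ M → UU M ⊆ UU N := by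
    intro N M h
    exact Set.iUnion₂_mono' fun k hk => ⟨k, h.trans hk, subset_rfl⟩
  have hUUmeas : ∀ N, MeasurableSet (UU N) :=
    fun N => MeasurableSet.iUnion fun k => MeasurableSet.iUnion fun _ => hAmeas k
  set Tup : Set Ω := ⋂ N : ℤ, UU N with hTup
  have hTupMeas : MeasurableSet Tup := MeasurableSet.iInter fun N => hUUmeas N
  have hTup1 : μ Tup = 1 := by
    set s : Lex (ℤ × ℕ) → MeasurableSpace Ω :=
      fun l => MeasurableSpace.comap (X (ofLex l)) inferInstance with hsdef
    have h_le : ∀ l, s l ≤ (inferInstance : MeasurableSpace Ω) :=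
      fun l => (hmeas _).comap_le
    have h_indep : iIndep s μ := hindep.iIndep
    have htail : MeasurableSet[Filter.limsup s atTop] Tup := by
      rw [limsup_eq]
      refine MeasurableSpace.measurableSet_sInf.mpr fun a ha => ?_
      simp only [Set.mem_setOf_eq, eventually_atTop] at ha
      obtain ⟨l0, hl0⟩ := ha
      set N0 : ℤ := (ofLex l0).1 + 1 with hN0
      have hcol : ∀ p : ℤ × ℕ, N0 ≤ p.1 → ∀ t : Set EReal, MeasurableSet t →
          MeasurableSet[a] (X p ⁻¹' t) := by
        intro p hp t ht
        have hle : l0 ≤ toLex p := by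
          have h1 : (ofLex l0).1 < p.1 := by omega
          have : toLex (ofLex l0) ≤ toLex p := by
            rw [Prod.Lex.le_iff]
            exact Or.inl h1
          simpa using this
        exact hl0 (toLex p) hle _ ⟨t, ht, rfl⟩
      have hTup_eq : Tup = ⋂ N : ℤ, UU (max N N0) := by
        apply Set.Subset.antisymm
        · intro x hx
          exact Set.mem_iInter.mpr fun N => Set.mem_iInter.mp hx (max N N0)
        · intro x hx
          exact Set.mem_iInter.mpr fun N =>
            hUUmono (le_max_left N N0) (Set.mem_iInter.mp hx N)
      rw [hTup_eq]
      refine MeasurableSet.iInter fun N => ?_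
      refine MeasurableSet.iUnion fun k => MeasurableSet.iUnion fun hk => ?_
      refine hA_meas_le k a fun p hp t ht => ?_
      exact hcol p (le_trans (le_trans (le_max_right N N0) hk) hp) t ht
    have hzo := ProbabilityTheory.measure_zero_or_one_of_measurableSet_limsup_atTop
      h_le h_indep htail
    have hiInter : (⋂ n : ℕ, UU (n : ℤ)) = Tup := by
      apply Set.Subset.antisymm
      · intro x hx
        refine Set.mem_iInter.mpr fun N => ?_
        exact hUUmono (Int.self_le_toNat N) (Set.mem_iInter.mp hx N.toNat)
      · intro x hx
        exact Set.mem_iInter.mpr fun n => Set.mem_iInter.mp hx (n : ℤ)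
    have htend : Tendsto (fun n : ℕ => μ (UU (n : ℤ))) atTop
        (nhds (μ (⋂ n : ℕ, UU (n : ℤ)))) := by
      refine tendsto_measure_iInter_atTop
        (fun n => (hUUmeas _).nullMeasurableSet) ?_ ⟨0, measure_ne_top μ _⟩
      intro n m hnm
      exact hUUmono (by exact_mod_cast hnm)
    rw [hiInter] at htend
    have hge : c ≤ μ Tup := by
      refine ge_of_tendsto htend (Filter.Eventually.of_forall fun n => ?_)
      refine le_trans (hcA (n : ℤ)) (measure_mono ?_)
      intro x hx
      exact Set.mem_iUnion₂.mpr ⟨(n : ℤ), le_rfl, hx⟩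
    rcases hzo with h0 | h1
    · exact absurd (h0 ▸ hge) (by simpa using hc.ne')
    · exact h1

  have hTupc0 : μ Tupᶜ = 0 := by
    rw [prob_compl_eq_one_sub hTupMeas, hTup1, tsub_self]
  have up_ae : ∀ᵐ ω ∂μ, ∀ N : ℤ, ∃ k : ℤ, N ≤ k ∧ ω ∈ A k := by
    have hae : ∀ᵐ ω ∂μ, ω ∈ Tup := by
      rw [MeasureTheory.ae_iff]
      exact hTupc0
    filter_upwards [hae] with ω hω N
    obtain ⟨k, hk, hA⟩ := Set.mem_iUnion₂.mp (Set.mem_iInter.mp hω N)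
    exact ⟨k, hk, hA⟩
  -- ===== stationarity : unbounded below =====
  have down_ae : ∀ᵐ ω ∂μ, ∀ N : ℤ, ∃ k : ℤ, k ≤ N ∧ ω ∈ A k := by
    set shift : ((ℤ × ℕ) → EReal) → ((ℤ × ℕ) → EReal) :=
      fun f p => f (p.1 + 1, p.2) with hshiftdef
    have hshift : Measurable shift :=
      measurable_pi_lambda _ fun p => measurable_pi_apply _
    have hmaplaw : μ.map (fun ω p => X ((p.1 + 1, p.2) : ℤ × ℕ) ω) = μ.map Φ := by
      refine aux_map_family_eq (F := F) hmeas hindep hlaw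
        (fun p => (p.1 + 1, p.2)) ?_
      rintro ⟨a1, a2⟩ ⟨b1, b2⟩ h
      simp only [Prod.mk.injEq] at h
      exact Prod.ext (by omega) h.2
    set ν : Measure ((ℤ × ℕ) → EReal) := μ.map Φ with hνdef
    have hν_shift : ν.map shift = ν := by
      rw [hνdef, Measure.map_map hshift hΦ]
      exact hmaplaw
    set C : ℤ → Set ((ℤ × ℕ) → EReal) :=
      fun N => ⋂ k : ℤ, ⋂ (_ : k ≤ N), (GF k)ᶜ with hCdef
    have hCmeas : ∀ N, MeasurableSet (C N) :=
      fun N => MeasurableSet.iInter fun k => MeasurableSet.iInter fun _ =>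
        (hGFmeas k).compl
    have hshiftGF : ∀ k : ℤ, shift ⁻¹' GF k = GF (k + 1) := by
      intro k
      ext f
      simp only [Set.mem_preimage, hGFdef, Set.mem_setOf_eq, hshiftdef]
      constructor
      · rintro ⟨h1, h2⟩
        refine ⟨h1, fun j hj => ?_⟩
        obtain ⟨i, hij, hle⟩ := h2 j hj
        exact ⟨i, hij, by rwa [show k + (j : ℤ) + 1 = k + 1 + (j : ℤ) from by ring] at hle⟩
      · rintro ⟨h1, h2⟩
        refine ⟨h1, fun j hj => ?_⟩
        obtain ⟨i, hij, hle⟩ := h2 j hj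
        exact ⟨i, hij, by rwa [show k + 1 + (j : ℤ) = k + (j : ℤ) + 1 from by ring] at hle⟩
    have hshiftC : ∀ N : ℤ, shift ⁻¹' C N = C (N + 1) := by
      intro N
      have h1 : shift ⁻¹' C N = ⋂ k : ℤ, ⋂ (_ : k ≤ N), (GF (k + 1))ᶜ := by
        simp only [hCdef, Set.preimage_iInter, Set.preimage_compl, hshiftGF]
      rw [h1]
      ext f
      simp only [hCdef, Set.mem_iInter, Set.mem_compl_iff]
      constructor
      · intro h k hk
        have h2 := h (k - 1) (by omega)
        rwa [show k - 1 + 1 = k from by ring] at h2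
      · intro h k hk
        exact h (k + 1) (by omega)
    have hCν_step : ∀ N : ℤ, ν (C (N + 1)) = ν (C N) := by
      intro N
      conv_rhs => rw [← hν_shift]
      rw [Measure.map_apply hshift (hCmeas N), hshiftC]
    have hCconst : ∀ N : ℤ, ν (C N) = ν (C 0) := by
      intro N
      induction N using Int.induction_on with
      | zero => rfl
      | succ n ih => rw [hCν_step (n : ℤ), ih]
      | pred n ih =>
        have h := hCν_step (-(n : ℤ) - 1)
        rw [show -(n : ℤ) - 1 + 1 = -(n : ℤ) from by ring] at h
        rw [← h]
        exact ih
    have hPhiC : ∀ N : ℤ, Φ ⁻¹' C N = ⋂ k : ℤ, ⋂ (_ : k ≤ N), (A k)ᶜ := by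
      intro N
      simp only [hCdef, Set.preimage_iInter, Set.preimage_compl]
      rfl
    have hνC : ∀ N : ℤ, ν (C N) = μ (⋂ k : ℤ, ⋂ (_ : k ≤ N), (A k)ᶜ) := by
      intro N
      rw [hνdef, Measure.map_apply hΦ (hCmeas N), hPhiC]
    have hinterempty : μ (⋂ k : ℤ, (A k)ᶜ) = 0 := by
      have hsub : (⋂ k : ℤ, (A k)ᶜ) ⊆ Tupᶜ := by
        intro x hx hT
        obtain ⟨k, _, hk⟩ := Set.mem_iUnion₂.mp (Set.mem_iInter.mp hT 0)
        exact (Set.mem_iInter.mp hx k) hk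
      exact le_antisymm ((measure_mono hsub).trans_eq hTupc0) zero_le
    have htendD : Tendsto (fun n : ℕ => μ (Φ ⁻¹' C (n : ℤ))) atTop
        (nhds (μ (⋂ n : ℕ, Φ ⁻¹' C (n : ℤ)))) := by
      refine tendsto_measure_iInter_atTop
        (fun n => (hΦ (hCmeas _)).nullMeasurableSet) ?_ ⟨0, measure_ne_top μ _⟩
      intro n m hnm
      refine Set.preimage_mono ?_
      intro f hf
      simp only [hCdef, Set.mem_iInter] at hf ⊢
      intro k hk
      exact hf k (hk.trans (by exact_mod_cast hnm))
    have hiInterD : (⋂ n : ℕ, Φ ⁻¹' C (n : ℤ)) = ⋂ k : ℤ, (A k)ᶜ := by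
      apply Set.Subset.antisymm
      · intro x hx
        refine Set.mem_iInter.mpr fun k => ?_
        have h1 := Set.mem_iInter.mp hx k.toNat
        rw [hPhiC] at h1
        exact Set.mem_iInter.mp (Set.mem_iInter.mp h1 k) (Int.self_le_toNat k)
      · intro x hx
        refine Set.mem_iInter.mpr fun n => ?_
        rw [hPhiC]
        exact Set.mem_iInter.mpr fun k => Set.mem_iInter.mpr fun _ =>
          Set.mem_iInter.mp hx k
    have hconstval : ∀ n : ℕ, μ (Φ ⁻¹' C (n : ℤ)) = ν (C 0) := by
      intro n
      rw [← Measure.map_apply hΦ (hCmeas _), ← hνdef, hCconst]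
    have hC0 : ν (C 0) = 0 := by
      have h1 : Tendsto (fun _ : ℕ => ν (C 0)) atTop
          (nhds (μ (⋂ n : ℕ, Φ ⁻¹' C (n : ℤ)))) := by
        refine htendD.congr fun n => ?_
        rw [hconstval n]
      have h2 := tendsto_nhds_unique h1 tendsto_const_nhds
      rw [← h2, hiInterD]
      exact hinterempty
    have hCN0 : ∀ N : ℤ, μ (⋂ k : ℤ, ⋂ (_ : k ≤ N), (A k)ᶜ) = 0 := by
      intro N
      rw [← hνC N, hCconst N, hC0]
    rw [MeasureTheory.ae_all_iff]
    intro N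
    rw [MeasureTheory.ae_iff]
    convert hCN0 N using 2
    ext ω
    simp only [Set.mem_setOf_eq, not_exists, not_and, Set.mem_iInter, Set.mem_compl_iff]

  filter_upwards [up_ae, down_ae] with ω h1 h2
  constructor
  · intro N
    obtain ⟨k, hk, hA⟩ := h1 N
    exact ⟨k, hk, (hGoodA k ω).mpr hA⟩
  · intro N
    obtain ⟨k, hk, hA⟩ := h2 N
    exact ⟨k, hk, (hGoodA k ω).mpr hA⟩

end
end
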